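/- arXiv:2012.15604 — 5 statements merged into one kernel-verified Lean document; each statement's English description precedes it below -/
import Mathlib

section
/- For every function Φ of bounded variation on [a,b] that is continuous and non-constant (e.g. Φ(t) = t), and every piecewise constant (step) function Ψ on [a,b], the total variation of Φ − Ψ on [a,b] is at least the total variation of Φ on [a,b]; in particular for Φ(t)=t it is at least b−a. -/
open Set
open scoped ENNReal NNReal

lemma evar_Icc_le_Ioo (f : ℝ → ℝ) {c d : ℝ} (hcd : c < d)
    (hf : ContinuousOn f (Set.Icc c d)) :
    eVariationOn f (Set.Icc c d) ≤ eVariationOn f (Set.Ioo c d) := by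
  rw [eVariationOn]
  refine iSup_le ?_
  rintro ⟨n, u, hu, us⟩
  apply ENNReal.le_of_forall_pos_le_add
  intro ε hε _
  -- small positive real
  set η : ℝ := (ε : ℝ) / (2 * n + 2) with hηdef
  have hη : 0 < η := by
    apply div_pos (by exact_mod_cast hε) (by positivity)
  -- continuity at the endpoints
  have hc : ContinuousWithinAt f (Set.Icc c d) c :=
    hf c ⟨le_rfl, hcd.le⟩
  have hd : ContinuousWithinAt f (Set.Icc c d) d :=
    hf d ⟨hcd.le, le_rfl⟩
  rw [Metric.continuousWithinAt_iff] at hc hd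
  obtain ⟨δ₁, hδ₁, H₁⟩ := hc (η / 2) (by positivity)
  obtain ⟨δ₂, hδ₂, H₂⟩ := hd (η / 2) (by positivity)
  set m : ℝ := (c + d) / 2 with hm
  set c' : ℝ := min (c + δ₁ / 2) m with hc'
  set d' : ℝ := max (d - δ₂ / 2) m with hd'
  have hcc' : c < c' := lt_min (by linarith) (by simp [hm]; linarith)
  have hc'm : c' ≤ m := min_le_right _ _
  have hmd' : m ≤ d' := le_max_right _ _
  have hd'd : d' < d := max_lt (by linarith) (by simp [hm]; linarith)
  have hc'd' : c' ≤ d' := hc'm.trans hmd'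
  have hc'd : c' < d := lt_of_le_of_lt hc'd' hd'd
  have hcd' : c < d' := lt_of_lt_of_le hcc' hc'd'
  -- key estimates near the endpoints
  have keyc : ∀ x ∈ Set.Icc c c', dist (f x) (f c') ≤ η := by
    intro x hx
    have hx1 : x ∈ Set.Icc c d := ⟨hx.1, hx.2.trans hc'd.le⟩
    have hx2 : dist x c < δ₁ := by
      rw [Real.dist_eq, abs_of_nonneg (by linarith [hx.1])]
      have : x ≤ c + δ₁ / 2 := hx.2.trans (min_le_left _ _)
      linarith
    have hxc : dist (f x) (f c) < η / 2 := H₁ hx1 hx2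
    have hc'1 : c' ∈ Set.Icc c d := ⟨hcc'.le, hc'd.le⟩
    have hc'2 : dist c' c < δ₁ := by
      rw [Real.dist_eq, abs_of_nonneg (by linarith)]
      have : c' ≤ c + δ₁ / 2 := min_le_left _ _
      linarith
    have hcc : dist (f c') (f c) < η / 2 := H₁ hc'1 hc'2
    calc dist (f x) (f c') ≤ dist (f x) (f c) + dist (f c) (f c') := dist_triangle _ _ _
      _ ≤ η := by rw [dist_comm (f c)] ; linarith
  have keyd : ∀ x ∈ Set.Icc d' d, dist (f x) (f d') ≤ η := by
    intro x hx
    have hx1 : x ∈ Set.Icc c d := ⟨hcd'.le.trans hx.1, hx.2⟩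
    have hx2 : dist x d < δ₂ := by
      rw [Real.dist_eq, abs_of_nonpos (by linarith [hx.2])]
      have : d - δ₂ / 2 ≤ x := (le_max_left _ _).trans hx.1
      linarith
    have hxd : dist (f x) (f d) < η / 2 := H₂ hx1 hx2
    have hd'1 : d' ∈ Set.Icc c d := ⟨hcd'.le, hd'd.le⟩
    have hd'2 : dist d' d < δ₂ := by
      rw [Real.dist_eq, abs_of_nonpos (by linarith)]
      have : d - δ₂ / 2 ≤ d' := le_max_left _ _
      linarith
    have hdd : dist (f d') (f d) < η / 2 := H₂ hd'1 hd'2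
    calc dist (f x) (f d') ≤ dist (f x) (f d) + dist (f d) (f d') := dist_triangle _ _ _
      _ ≤ η := by rw [dist_comm (f d)] ; linarith
  -- clamped sequence
  set v : ℕ → ℝ := fun j => min (max (u j) c') d' with hv
  have hvmono : Monotone v := fun i j hij =>
    min_le_min (max_le_max (hu hij) le_rfl) le_rfl
  have hvmem : ∀ j, v j ∈ Set.Ioo c d := by
    intro j
    constructor
    · have : c' ≤ v j := le_min (le_max_right _ _) hc'd'
      linarith [hcc']
    · exact lt_of_le_of_lt (min_le_right _ _) hd'd
  have keyv : ∀ j, edist (f (u j)) (f (v j)) ≤ ENNReal.ofReal η := by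
    intro j
    rw [edist_dist]
    apply ENNReal.ofReal_le_ofReal
    rcases le_or_gt (u j) c' with h1 | h1
    · have hvj : v j = c' := by
        rw [hv]; simp only
        rw [max_eq_right h1, min_eq_left hc'd']
      rw [hvj]
      exact keyc (u j) ⟨(us j).1, h1⟩
    rcases le_or_gt d' (u j) with h2 | h2
    · have hvj : v j = d' := by
        rw [hv]; simp only
        rw [min_eq_right (le_max_of_le_left h2)]
      rw [hvj]
      exact keyd (u j) ⟨h2, (us j).2⟩
    · have hvj : v j = u j := by
        rw [hv]; simp only
        rw [max_eq_left h1.le, min_eq_left h2.le]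
      rw [hvj, dist_self]
      linarith
  -- termwise bound and summation
  have termwise : ∀ i, edist (f (u (i + 1))) (f (u i)) ≤
      edist (f (v (i + 1))) (f (v i)) + (ENNReal.ofReal η + ENNReal.ofReal η) := by
    intro i
    calc edist (f (u (i + 1))) (f (u i))
        ≤ edist (f (u (i + 1))) (f (v (i + 1))) + edist (f (v (i + 1))) (f (v i))
            + edist (f (v i)) (f (u i)) := edist_triangle4 _ _ _ _
      _ ≤ ENNReal.ofReal η + edist (f (v (i + 1))) (f (v i)) + ENNReal.ofReal η := by
          gcongr
          · exact keyv (i + 1)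
          · rw [edist_comm]; exact keyv i
      _ = edist (f (v (i + 1))) (f (v i)) + (ENNReal.ofReal η + ENNReal.ofReal η) := by ring
  calc ∑ i ∈ Finset.range n, edist (f (u (i + 1))) (f (u i))
      ≤ ∑ i ∈ Finset.range n, (edist (f (v (i + 1))) (f (v i))
          + (ENNReal.ofReal η + ENNReal.ofReal η)) :=
        Finset.sum_le_sum fun i _ => termwise i
    _ = (∑ i ∈ Finset.range n, edist (f (v (i + 1))) (f (v i)))
          + n * (ENNReal.ofReal η + ENNReal.ofReal η) := by
        rw [Finset.sum_add_distrib, Finset.sum_const, Finset.card_range, nsmul_eq_mul]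
    _ ≤ eVariationOn f (Set.Ioo c d) + ε := by
        gcongr
        · exact eVariationOn.sum_le (f := f) (n := n) hvmono hvmem
        · -- n * 2η ≤ ε
          have harith : (n : ℝ) * (η + η) ≤ (ε : ℝ) := by
            have he : ((2:ℝ) * n + 2) * η = ε := by
              rw [hηdef]; field_simp
            nlinarith [hη.le]
          calc (n : ℝ≥0∞) * (ENNReal.ofReal η + ENNReal.ofReal η)
              = ENNReal.ofReal ((n:ℝ) * (η + η)) := by
                rw [← ENNReal.ofReal_add hη.le hη.le, ← ENNReal.ofReal_natCast n,
                  ← ENNReal.ofReal_mul (by positivity)]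
            _ ≤ ENNReal.ofReal (ε:ℝ) := ENNReal.ofReal_le_ofReal harith
            _ = (ε : ℝ≥0∞) := ENNReal.ofReal_coe_nnreal

lemma evar_sub_const' (f : ℝ → ℝ) (k : ℝ) (s : Set ℝ) :
    eVariationOn (fun x => f x - k) s = eVariationOn f s := by
  simp only [eVariationOn]
  refine iSup_congr fun p => Finset.sum_congr rfl fun i _ => ?_
  simp [edist_dist, Real.dist_eq]

lemma evar_decomp' (f : ℝ → ℝ) (u : ℕ → ℝ) (hu : Monotone u) (n : ℕ) :
    eVariationOn f (Set.Icc (u 0) (u n)) =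
      ∑ i ∈ Finset.range n, eVariationOn f (Set.Icc (u i) (u (i + 1))) := by
  induction n with
  | zero => simp [Set.Icc_self, eVariationOn.subsingleton f (Set.subsingleton_singleton)]
  | succ n ih =>
    rw [Finset.sum_range_succ, ← ih]
    have h := eVariationOn.Icc_add_Icc f (s := Set.univ) (hu (Nat.zero_le n))
      (hu (Nat.le_succ n)) (Set.mem_univ (u n))
    simpa [Set.univ_inter] using h.symm


/-- For a continuous non-constant function `Φ` of bounded variation on `[a,b]` and any
step (piecewise constant) function `Ψ` on `[a,b]`, the total variation of `Φ − Ψ` is at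
least that of `Φ`; in particular for `Φ(t) = t` it is at least `b − a`. -/
theorem variation_sub_step_ge
    (a b : ℝ) (hab : a < b) (Φ Ψ : ℝ → ℝ)
    (hΦbv : BoundedVariationOn Φ (Set.Icc a b))
    (hΦcont : ContinuousOn Φ (Set.Icc a b))
    (hΦnonconst : ¬ ∀ s ∈ Set.Icc a b, ∀ t ∈ Set.Icc a b, Φ s = Φ t)
    (hΨstep : ∃ (n : ℕ) (t : Fin (n + 1) → ℝ), Monotone t ∧ t 0 = a ∧ t (Fin.last n) = b ∧
      ∀ i : Fin n, ∃ c : ℝ, ∀ s ∈ Set.Ioo (t i.castSucc) (t i.succ), Ψ s = c) :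
    eVariationOn Φ (Set.Icc a b) ≤ eVariationOn (fun s => Φ s - Ψ s) (Set.Icc a b) ∧
      ((∀ s ∈ Set.Icc a b, Φ s = s) →
        ENNReal.ofReal (b - a) ≤ eVariationOn (fun s => Φ s - Ψ s) (Set.Icc a b)) := by
  obtain ⟨n, t, ht, ht0, htl, hstep⟩ := hΨstep
  set g : ℝ → ℝ := fun s => Φ s - Ψ s with hg
  -- ℕ-indexed version of the partition
  set u : ℕ → ℝ := fun i => t ⟨min i n, Nat.lt_succ_of_le (min_le_right i n)⟩ with hu
  have humono : Monotone u := by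
    intro i j hij
    exact ht (by simp [Fin.mk_le_mk]; omega)
  have hu0 : u 0 = a := by
    rw [hu]; simp only [Nat.zero_min]
    convert ht0 using 2
    simp [Fin.ext_iff]
  have hun : u n = b := by
    rw [hu]; simp only [min_self]
    rw [← htl]; rfl
  -- pieces are inside `[a,b]`
  have hsub : ∀ i, i ≤ n → ∀ j, j ≤ n → Set.Icc (u i) (u j) ⊆ Set.Icc a b := by
    intro i hi j hj
    apply Set.Icc_subset_Icc
    · rw [← hu0]; exact humono (Nat.zero_le i)
    · rw [← hun]; exact humono hj
  -- per-piece inequality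
  have piece : ∀ i < n, eVariationOn Φ (Set.Icc (u i) (u (i + 1))) ≤
      eVariationOn g (Set.Icc (u i) (u (i + 1))) := by
    intro i hi
    have hui : u i = t (Fin.castSucc ⟨i, hi⟩) := by
      rw [hu]; apply congrArg t; apply Fin.ext; simp; omega
    have hui1 : u (i + 1) = t (Fin.succ ⟨i, hi⟩) := by
      rw [hu]; apply congrArg t; apply Fin.ext; simp; omega
    rcases eq_or_lt_of_le (humono (Nat.le_succ i)) with heq | hlt
    · rw [← heq, Set.Icc_self]
      rw [eVariationOn.subsingleton Φ Set.subsingleton_singleton]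
      exact bot_le
    · obtain ⟨k, hk⟩ := hstep ⟨i, hi⟩
      have heqon : Set.EqOn g (fun s => Φ s - k) (Set.Ioo (u i) (u (i + 1))) := by
        intro x hx
        rw [hg]; simp only
        rw [hk x (by rwa [← hui, ← hui1])]
      calc eVariationOn Φ (Set.Icc (u i) (u (i + 1)))
          ≤ eVariationOn Φ (Set.Ioo (u i) (u (i + 1))) :=
            evar_Icc_le_Ioo Φ hlt (hΦcont.mono (hsub i hi.le (i + 1) hi))
        _ = eVariationOn (fun s => Φ s - k) (Set.Ioo (u i) (u (i + 1))) :=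
            (evar_sub_const' Φ k _).symm
        _ = eVariationOn g (Set.Ioo (u i) (u (i + 1))) :=
            (eVariationOn.eq_of_eqOn heqon).symm
        _ ≤ eVariationOn g (Set.Icc (u i) (u (i + 1))) :=
            eVariationOn.mono g Set.Ioo_subset_Icc_self
  have h1 : eVariationOn Φ (Set.Icc a b) ≤ eVariationOn g (Set.Icc a b) := by
    rw [← hu0, ← hun, evar_decomp' Φ u humono n, evar_decomp' g u humono n]
    exact Finset.sum_le_sum fun i hi => piece i (Finset.mem_range.mp hi)
  refine ⟨h1, fun hid => ?_⟩
  refine le_trans ?_ h1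
  have hedist := eVariationOn.edist_le Φ (Set.left_mem_Icc.mpr hab.le)
    (Set.right_mem_Icc.mpr hab.le)
  rw [hid a (Set.left_mem_Icc.mpr hab.le), hid b (Set.right_mem_Icc.mpr hab.le)] at hedist
  refine le_trans (le_of_eq ?_) hedist
  rw [edist_dist, Real.dist_eq, abs_of_nonpos (by linarith), neg_sub]
end

section
/- Let ℓ be a continuous linear functional on C([a,b], ℂ). Then there exists a sequence (ℓ_k) of functionals, each of the form ℓ_k(x) = Σ_{j=1}^{p_k} c_{k,j} x(t_{k,j}) with c_{k,j} ∈ ℂ and t_{k,j} ∈ [a,b], such that ℓ_k(x) → ℓ(x) for every x ∈ C([a,b], ℂ). -/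
open Filter

noncomputable section MultipointAux

open unitInterval in
/-- The complex-valued Bernstein basis function. -/
def bernsteinC (n k : ℕ) : C(unitInterval, ℂ) :=
  (⟨Complex.ofReal, Complex.continuous_ofReal⟩ : C(ℝ, ℂ)).comp (bernstein n k)

@[simp] lemma bernsteinC_apply (n k : ℕ) (x : unitInterval) :
    bernsteinC n k x = (bernstein n k x : ℂ) := rfl

/-- The complex Bernstein approximation. -/
def bernsteinApproxC (n : ℕ) (f : C(unitInterval, ℂ)) : C(unitInterval, ℂ) :=
  ∑ k : Fin (n + 1), f (bernstein.z k) • bernsteinC n k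

lemma bernsteinApproxC_apply (n : ℕ) (f : C(unitInterval, ℂ)) (x : unitInterval) :
    bernsteinApproxC n f x = ∑ k : Fin (n + 1), f (bernstein.z k) * (bernstein n k x : ℂ) := by
  simp [bernsteinApproxC, smul_eq_mul]

/-- Real part as a continuous map. -/
def reCM (f : C(unitInterval, ℂ)) : C(unitInterval, ℝ) :=
  ⟨fun s => (f s).re, Complex.continuous_re.comp f.continuous⟩

def imCM (f : C(unitInterval, ℂ)) : C(unitInterval, ℝ) :=
  ⟨fun s => (f s).im, Complex.continuous_im.comp f.continuous⟩

lemma bernsteinApproxC_re (n : ℕ) (f : C(unitInterval, ℂ)) (x : unitInterval) :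
    (bernsteinApproxC n f x).re = bernsteinApproximation n (reCM f) x := by
  rw [bernsteinApproxC_apply, bernsteinApproximation.apply, Complex.re_sum]
  refine Finset.sum_congr rfl fun k _ => ?_
  rw [mul_comm, Complex.re_ofReal_mul, mul_comm]; exact mul_comm _ _

lemma bernsteinApproxC_im (n : ℕ) (f : C(unitInterval, ℂ)) (x : unitInterval) :
    (bernsteinApproxC n f x).im = bernsteinApproximation n (imCM f) x := by
  rw [bernsteinApproxC_apply, bernsteinApproximation.apply, Complex.im_sum]
  refine Finset.sum_congr rfl fun k _ => ?_
  rw [mul_comm, Complex.im_ofReal_mul, mul_comm]; exact mul_comm _ _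

lemma bernsteinApproxC_uniform (f : C(unitInterval, ℂ)) :
    Tendsto (fun n => bernsteinApproxC n f) atTop (nhds f) := by
  rw [tendsto_iff_norm_sub_tendsto_zero]
  have hre := tendsto_iff_norm_sub_tendsto_zero.mp (bernsteinApproximation_uniform (reCM f))
  have him := tendsto_iff_norm_sub_tendsto_zero.mp (bernsteinApproximation_uniform (imCM f))
  have hbound : ∀ n, ‖bernsteinApproxC n f - f‖ ≤
      ‖bernsteinApproximation n (reCM f) - reCM f‖ +
      ‖bernsteinApproximation n (imCM f) - imCM f‖ := by
    intro n
    refine ContinuousMap.norm_le _ (by positivity) |>.mpr fun x => ?_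
    have h1 : ((bernsteinApproxC n f - f) x).re =
        (bernsteinApproximation n (reCM f) - reCM f) x := by
      simp [bernsteinApproxC_re, reCM]
    have h2 : ((bernsteinApproxC n f - f) x).im =
        (bernsteinApproximation n (imCM f) - imCM f) x := by
      simp [bernsteinApproxC_im, imCM]
    calc ‖(bernsteinApproxC n f - f) x‖
        ≤ |((bernsteinApproxC n f - f) x).re| + |((bernsteinApproxC n f - f) x).im| :=
          Complex.norm_le_abs_re_add_abs_im _
      _ = ‖(bernsteinApproximation n (reCM f) - reCM f) x‖ +
          ‖(bernsteinApproximation n (imCM f) - imCM f) x‖ := by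
          rw [h1, h2]; rfl
      _ ≤ ‖bernsteinApproximation n (reCM f) - reCM f‖ +
          ‖bernsteinApproximation n (imCM f) - imCM f‖ := by
          gcongr <;> exact ContinuousMap.norm_coe_le_norm _ _
  have : Tendsto (fun n => ‖bernsteinApproximation n (reCM f) - reCM f‖ +
      ‖bernsteinApproximation n (imCM f) - imCM f‖) atTop (nhds 0) := by
    simpa using hre.add him
  exact squeeze_zero (fun n => norm_nonneg _) hbound this

end MultipointAux

/-- For every continuous linear functional `ℓ` on `C([a,b], ℂ)` there is a sequence of
functionals of the form `x ↦ Σ_{j=1}^{p_k} c_{k,j} x(t_{k,j})` converging to `ℓ`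
pointwise (weak* sequential density of multipoint functionals). -/
theorem multipoint_functionals_weakstar_dense
    (a b : ℝ) (hab : a < b)
    (ℓ : C(Set.Icc a b, ℂ) →L[ℂ] ℂ) :
    ∃ (p : ℕ → ℕ) (c : (k : ℕ) → Fin (p k) → ℂ) (t : (k : ℕ) → Fin (p k) → Set.Icc a b),
      ∀ x : C(Set.Icc a b, ℂ),
        Tendsto (fun k => ∑ j : Fin (p k), c k j * x (t k j)) atTop (nhds (ℓ x)) := by
  set e : Set.Icc a b ≃ₜ Set.Icc (0:ℝ) 1 := iccHomeoI a b hab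
  refine ⟨fun k => k + 1,
    fun k j => ℓ ((bernsteinC k j).comp (e : C(Set.Icc a b, Set.Icc (0:ℝ) 1))),
    fun k j => e.symm (bernstein.z j), fun x => ?_⟩
  set y : C(unitInterval, ℂ) := x.comp (e.symm : C(Set.Icc (0:ℝ) 1, Set.Icc a b)) with hy
  have hxy : x = y.comp (e : C(Set.Icc a b, Set.Icc (0:ℝ) 1)) := by
    ext s; simp [hy]
  have key : ∀ k, ∑ j : Fin (k + 1),
      ℓ ((bernsteinC k j).comp (e : C(Set.Icc a b, Set.Icc (0:ℝ) 1))) * x (e.symm (bernstein.z j)) =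
      ℓ ((bernsteinApproxC k y).comp (e : C(Set.Icc a b, Set.Icc (0:ℝ) 1))) := by
    intro k
    have hcomp : (bernsteinApproxC k y).comp (e : C(Set.Icc a b, Set.Icc (0:ℝ) 1)) =
        ∑ j : Fin (k + 1), y (bernstein.z j) • (bernsteinC k j).comp (e : C(Set.Icc a b, Set.Icc (0:ℝ) 1)) := by
      ext s
      simp [bernsteinApproxC, ContinuousMap.sum_apply]
    rw [hcomp, map_sum]
    refine Finset.sum_congr rfl fun j _ => ?_
    rw [map_smul, smul_eq_mul, mul_comm]
    congr 1
  have hconv : Tendsto (fun k => (bernsteinApproxC k y).comp (e : C(Set.Icc a b, Set.Icc (0:ℝ) 1)))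
      atTop (nhds (y.comp (e : C(Set.Icc a b, Set.Icc (0:ℝ) 1)))) := by
    rw [tendsto_iff_norm_sub_tendsto_zero]
    have h0 := tendsto_iff_norm_sub_tendsto_zero.mp (bernsteinApproxC_uniform y)
    refine squeeze_zero (fun k => norm_nonneg _) (fun k => ?_) h0
    refine ContinuousMap.norm_le _ (norm_nonneg _) |>.mpr fun s => ?_
    calc ‖((bernsteinApproxC k y).comp (e : C(Set.Icc a b, Set.Icc (0:ℝ) 1)) - y.comp (e : C(Set.Icc a b, Set.Icc (0:ℝ) 1))) s‖
        = ‖(bernsteinApproxC k y - y) (e s)‖ := by simp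
      _ ≤ ‖bernsteinApproxC k y - y‖ := ContinuousMap.norm_coe_le_norm _ _
  have := (ℓ.continuous.tendsto _).comp hconv
  rw [← hxy] at this
  simpa only [key, Function.comp_def] using this
end

section
/- Let B : C([a,b], ℂ^m) → ℂ^m be a continuous linear operator, A ∈ L¹([a,b], ℂ^{m×m}), and Y the matrizant of y' = −Ay with Y(a) = I. The boundary-value problem x' + A x = f a.e., B x = q has a unique solution x ∈ W¹₁([a,b], ℂ^m) for all f ∈ L¹ and q ∈ ℂ^m if and only if the m×m matrix [BY], whose j-th column is B applied to the j-th column of Y, is invertible. -/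
open MeasureTheory Matrix

attribute [local instance] Matrix.linftyOpNormedAddCommGroup Matrix.linftyOpNormedRing
  Matrix.linftyOpNormedSpace

noncomputable instance matrixENormedAddMonoid (m : ℕ) : ENormedAddMonoid (Matrix (Fin m) (Fin m) ℂ) :=
  NormedAddGroup.toENormedAddMonoid

noncomputable instance matrixContinuousENorm (m : ℕ) : ContinuousENorm (Matrix (Fin m) (Fin m) ℂ) :=
  SeminormedAddGroup.toContinuousENorm

private lemma pow_succ_add_le (k : ℕ) (x : ℝ) (hx : 0 ≤ x) :
    x ^ (k+1) + (k+1) * x ^ k ≤ (x + 1) ^ (k+1) := by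
  rw [add_pow]
  have hsub : ({k, k+1} : Finset ℕ) ⊆ Finset.range (k+2) := by
    intro i hi; simp at hi; rcases hi with h | h <;> simp [h]
  have := Finset.sum_le_sum_of_subset_of_nonneg hsub
    (fun i _ _ => by positivity : ∀ i ∈ Finset.range (k+2), i ∉ ({k, k+1} : Finset ℕ) →
      0 ≤ x ^ i * 1 ^ (k+1-i) * ((k+1).choose i : ℝ))
  refine le_trans (le_of_eq ?_) this
  rw [Finset.sum_pair (by omega)]
  simp [Nat.choose_succ_self_right]
  ring

private lemma sum_pow_succ_le (k N : ℕ) :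
    ((k:ℝ)+1) * ∑ i ∈ Finset.range N, ((i:ℝ)+1) ^ k ≤ ((N:ℝ)+1) ^ (k+1) := by
  induction N with
  | zero => simp
  | succ N ih =>
    rw [Finset.sum_range_succ, mul_add]
    have h2 := pow_succ_add_le k ((N:ℝ)+1) (by positivity)
    push_cast
    push_cast at ih h2
    nlinarith [ih, h2]

private lemma key_ineq {a t : ℝ} (hat : a ≤ t) {g : ℝ → ℝ}
    (hgi : IntegrableOn g (Set.Icc a t)) (hg0 : ∀ s, 0 ≤ g s) (k : ℕ) :
    ∫ s in a..t, g s * (∫ r in a..s, g r) ^ k ≤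
      (∫ s in a..t, g s) ^ (k+1) / (k+1) := by
  set φ : ℝ → ℝ := fun s => ∫ r in a..s, g r with hφ
  change (∫ s in a..t, g s * (φ s) ^ k) ≤ (φ t) ^ (k+1) / ((k:ℝ)+1)
  have hII : ∀ u v, u ∈ Set.Icc a t → v ∈ Set.Icc a t → IntervalIntegrable g volume u v := by
    intro u v hu hv
    apply MeasureTheory.IntegrableOn.intervalIntegrable
    exact hgi.mono_set (Set.uIcc_subset_Icc hu hv)
  have hseg : ∀ u v, u ∈ Set.Icc a t → v ∈ Set.Icc a t → ∫ x in u..v, g x = φ v - φ u := by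
    intro u v hu hv
    have := intervalIntegral.integral_add_adjacent_intervals
      (hII a u (Set.left_mem_Icc.2 hat) hu) (hII u v hu hv)
    simp only [hφ] at *
    linarith
  have hmono : MonotoneOn φ (Set.Icc a t) := by
    intro u hu v hv huv
    have h := hseg u v hu hv
    have h2 : 0 ≤ ∫ x in u..v, g x :=
      intervalIntegral.integral_nonneg huv (fun x _ => hg0 x)
    linarith
  have hφcont : ContinuousOn φ (Set.Icc a t) := by
    have : Set.uIcc a t = Set.Icc a t := Set.uIcc_of_le hat
    rw [← this] at hgi ⊢
    exact intervalIntegral.continuousOn_primitive_interval hgi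
  have hφa : φ a = 0 := intervalIntegral.integral_same
  have hφ0 : ∀ x ∈ Set.Icc a t, 0 ≤ φ x := by
    intro x hx
    have := hmono (Set.left_mem_Icc.2 hat) hx hx.1
    rw [hφa] at this; exact this
  have hgφk : IntegrableOn (fun s => g s * φ s ^ k) (Set.Icc a t) := by
    have := MeasureTheory.IntegrableOn.continuousOn_mul
      (ContinuousOn.pow hφcont k) hgi isCompact_Icc
    simpa [mul_comm] using this
  have hIIgφ : ∀ u v, u ∈ Set.Icc a t → v ∈ Set.Icc a t →
      IntervalIntegrable (fun s => g s * φ s ^ k) volume u v := by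
    intro u v hu hv
    exact (hgφk.mono_set (Set.uIcc_subset_Icc hu hv)).intervalIntegrable
  set c := φ t with hc
  have hc0 : 0 ≤ c := hφ0 t (Set.right_mem_Icc.2 hat)
  -- main bound for each N ≥ 1
  have main : ∀ N : ℕ, 0 < N →
      ∫ s in a..t, g s * φ s ^ k ≤ c ^ (k+1) / (k+1) * (((N:ℝ)+1)/N) ^ (k+1) := by
    intro N hN
    have hNR : (0:ℝ) < N := by exact_mod_cast hN
    set S : ℕ → Set ℝ := fun i => {x ∈ Set.Icc a t | (i:ℝ) * c / N ≤ φ x} with hS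
    have hbdd : ∀ i, BddBelow (S i) := fun i => ⟨a, fun x hx => hx.1.1⟩
    have hclosed : ∀ i, IsClosed (S i) := by
      intro i
      exact hφcont.preimage_isClosed_of_isClosed isClosed_Icc isClosed_Ici
    have hval : ∀ i : ℕ, i ≤ N → (i:ℝ) * c / N ∈ Set.Icc (φ a) (φ t) := by
      intro i hi
      rw [hφa]
      constructor
      · positivity
      · rw [div_le_iff₀ hNR]
        have : (i:ℝ) ≤ N := by exact_mod_cast hi
        nlinarith
    have hex : ∀ i : ℕ, i ≤ N → ∃ x ∈ Set.Icc a t, φ x = (i:ℝ) * c / N := by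
      intro i hi
      have := intermediate_value_Icc hat hφcont (hval i hi)
      obtain ⟨x, hx, hx2⟩ := this
      exact ⟨x, hx, hx2⟩
    have hne : ∀ i : ℕ, i ≤ N → (S i).Nonempty := by
      intro i hi
      obtain ⟨x, hx, hx2⟩ := hex i hi
      exact ⟨x, hx, hx2.ge⟩
    set s : ℕ → ℝ := fun i => sInf (S i) with hsdef
    have hmem : ∀ i : ℕ, i ≤ N → s i ∈ S i := fun i hi =>
      (hclosed i).csInf_mem (hne i hi) (hbdd i)
    have hφs : ∀ i : ℕ, i ≤ N → φ (s i) = (i:ℝ) * c / N := by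
      intro i hi
      obtain ⟨x, hx, hx2⟩ := hex i hi
      have hsx : s i ≤ x := csInf_le (hbdd i) ⟨hx, hx2.ge⟩
      exact le_antisymm (hx2 ▸ hmono (hmem i hi).1 hx hsx) (hmem i hi).2
    have hs0 : s 0 = a := by
      refine le_antisymm (csInf_le (hbdd 0) ⟨Set.left_mem_Icc.2 hat, by simp [hφa]⟩)
        (hmem 0 (Nat.zero_le _)).1.1
    have hsmono : ∀ i j : ℕ, i ≤ j → j ≤ N → s i ≤ s j := by
      intro i j hij hj
      refine csInf_le_csInf (hbdd i) (hne j hj) ?_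
      intro x hx
      refine ⟨hx.1, le_trans ?_ hx.2⟩
      have hij' : (i:ℝ) ≤ j := by exact_mod_cast hij
      gcongr
    -- piecewise bound
    have piece : ∀ i : ℕ, i < N →
        ∫ x in (s i)..(s (i+1)), g x * φ x ^ k ≤ (((i:ℝ)+1) * c / N) ^ k * (c / N) := by
      intro i hi
      have hmi := (hmem i hi.le).1
      have hmi1 := (hmem (i+1) hi).1
      have hii1 : s i ≤ s (i+1) := hsmono i (i+1) (Nat.le_succ i) hi
      have hb : ∫ x in (s i)..(s (i+1)), g x * (((i:ℝ)+1) * c / N) ^ k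
          = (((i:ℝ)+1) * c / N) ^ k * (φ (s (i+1)) - φ (s i)) := by
        rw [intervalIntegral.integral_mul_const, hseg _ _ hmi hmi1, mul_comm]
      have hφsub : φ (s (i+1)) - φ (s i) = c / N := by
        rw [hφs i hi.le, hφs (i+1) hi]
        push_cast; ring
      rw [← hφsub, ← hb] at *
      refine intervalIntegral.integral_mono_on hii1 (hIIgφ _ _ hmi hmi1) ?_ ?_
      · exact ((hII _ _ hmi hmi1).mul_const _)
      · intro x hx
        have hxab : x ∈ Set.Icc a t := ⟨le_trans hmi.1 hx.1, le_trans hx.2 hmi1.2⟩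
        have h1 : φ x ≤ φ (s (i+1)) := hmono hxab hmi1 hx.2
        have h2 : φ (s (i+1)) = ((i:ℝ)+1) * c / N := by rw [hφs (i+1) hi]; push_cast; ring
        refine mul_le_mul_of_nonneg_left ?_ (hg0 x)
        calc φ x ^ k ≤ φ (s (i+1)) ^ k := pow_le_pow_left₀ (hφ0 x hxab) h1 k
          _ = _ := by rw [h2]
    -- last piece is ≤ 0
    have hmN := (hmem N le_rfl).1
    have last : ∫ x in (s N)..t, g x * φ x ^ k ≤ 0 := by
      have hb : ∫ x in (s N)..t, g x * c ^ k = c ^ k * (φ t - φ (s N)) := by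
        rw [intervalIntegral.integral_mul_const, hseg _ _ hmN (Set.right_mem_Icc.2 hat), mul_comm]
      have : φ t - φ (s N) = 0 := by rw [hφs N le_rfl, hc]; field_simp; ring
      have hmain : ∫ x in (s N)..t, g x * φ x ^ k ≤ ∫ x in (s N)..t, g x * c ^ k := by
        refine intervalIntegral.integral_mono_on hmN.2
          (hIIgφ _ _ hmN (Set.right_mem_Icc.2 hat)) ((hII _ _ hmN (Set.right_mem_Icc.2 hat)).mul_const _) ?_
        intro x hx
        have hxab : x ∈ Set.Icc a t := ⟨le_trans hmN.1 hx.1, hx.2⟩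
        refine mul_le_mul_of_nonneg_left ?_ (hg0 x)
        exact pow_le_pow_left₀ (hφ0 x hxab) (hmono hxab (Set.right_mem_Icc.2 hat) hx.2) k
      rw [hb, this, mul_zero] at hmain
      exact hmain
    -- assemble
    have hsplit : ∫ x in a..t, g x * φ x ^ k =
        (∑ i ∈ Finset.range N, ∫ x in (s i)..(s (i+1)), g x * φ x ^ k)
          + ∫ x in (s N)..t, g x * φ x ^ k := by
      have hint : ∀ i, i < N → IntervalIntegrable (fun x => g x * φ x ^ k) volume (s i) (s (i+1)) :=
        fun i hi => hIIgφ _ _ (hmem i hi.le).1 (hmem (i+1) hi).1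
      have hadj := intervalIntegral.sum_integral_adjacent_intervals (μ := volume) hint
      rw [hadj, hs0]
      exact (intervalIntegral.integral_add_adjacent_intervals
        (hIIgφ _ _ (Set.left_mem_Icc.2 hat) hmN)
        (hIIgφ _ _ hmN (Set.right_mem_Icc.2 hat))).symm
    rw [hsplit]
    have hsum : (∑ i ∈ Finset.range N, ∫ x in (s i)..(s (i+1)), g x * φ x ^ k)
        ≤ ∑ i ∈ Finset.range N, (((i:ℝ)+1) * c / N) ^ k * (c / N) :=
      Finset.sum_le_sum (fun i hi => piece i (Finset.mem_range.1 hi))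
    have hsum2 : ∑ i ∈ Finset.range N, (((i:ℝ)+1) * c / N) ^ k * (c / N)
        ≤ c ^ (k+1) / (k+1) * (((N:ℝ)+1)/N) ^ (k+1) := by
      have h0 : ∑ i ∈ Finset.range N, (((i:ℝ)+1) * c / N) ^ k * (c / N)
          = (c/N) ^ (k+1) * ∑ i ∈ Finset.range N, ((i:ℝ)+1) ^ k := by
        rw [Finset.mul_sum]
        refine Finset.sum_congr rfl (fun i _ => ?_)
        have h1 : ((i:ℝ)+1) * c / ↑N = ((i:ℝ)+1) * (c / ↑N) := by ring
        rw [h1, mul_pow, pow_succ]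
        ring
      rw [h0]
      have hsb := sum_pow_succ_le k N
      have hsum0 : (0:ℝ) ≤ ∑ i ∈ Finset.range N, ((i:ℝ)+1)^k :=
        Finset.sum_nonneg (fun i _ => by positivity)
      have hkpos : (0:ℝ) < (k:ℝ)+1 := by positivity
      calc (c/↑N)^(k+1) * (∑ i ∈ Finset.range N, ((i:ℝ)+1)^k)
          = (c^(k+1) * (((k:ℝ)+1) * ∑ i ∈ Finset.range N, ((i:ℝ)+1)^k))
              / (((k:ℝ)+1) * (N:ℝ)^(k+1)) := by
            rw [div_pow, div_mul_eq_mul_div,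
              ← mul_div_mul_left (c^(k+1) * ∑ i ∈ Finset.range N, ((i:ℝ)+1)^k) ((N:ℝ)^(k+1)) hkpos.ne']
            ring
        _ ≤ (c^(k+1) * ((N:ℝ)+1)^(k+1)) / (((k:ℝ)+1) * (N:ℝ)^(k+1)) := by gcongr
        _ = c ^ (k+1) / ((k:ℝ)+1) * (((N:ℝ)+1)/N) ^ (k+1) := by
            rw [div_pow]; field_simp
    linarith
  -- take limit N → ∞
  have htend : Filter.Tendsto (fun N : ℕ => c ^ (k+1) / ((k:ℝ)+1) * (((N:ℝ)+1)/N) ^ (k+1))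
      Filter.atTop (nhds (c ^ (k+1) / ((k:ℝ)+1))) := by
    have h1 : Filter.Tendsto (fun N : ℕ => ((N:ℝ)+1)/N) Filter.atTop (nhds 1) := by
      have : ∀ᶠ N : ℕ in Filter.atTop, ((N:ℝ)+1)/N = 1 + 1/N := by
        filter_upwards [Filter.eventually_gt_atTop 0] with N hN
        have : (N:ℝ) ≠ 0 := by positivity
        field_simp
      rw [Filter.tendsto_congr' this]
      simpa using Filter.Tendsto.const_add (1:ℝ) tendsto_one_div_atTop_nhds_zero_nat
    have h2 := (h1.pow (k+1)).const_mul (c ^ (k+1) / ((k:ℝ)+1))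
    simpa using h2
  refine ge_of_tendsto htend ?_
  filter_upwards [Filter.eventually_gt_atTop 0] with N hN
  exact main N hN

private lemma continuous_mulVec_pair (m : ℕ) :
    Continuous fun p : Matrix (Fin m) (Fin m) ℂ × (Fin m → ℂ) => p.1 *ᵥ p.2 := by
  refine continuous_pi fun i => ?_
  simp only [Matrix.mulVec, dotProduct]
  exact continuous_finset_sum _ fun j _ =>
    (((continuous_apply j).comp ((continuous_apply i).comp continuous_fst))).mul
      ((continuous_apply j).comp continuous_snd)

private lemma integrableOn_mulVec {a b : ℝ} {m : ℕ} {A : ℝ → Matrix (Fin m) (Fin m) ℂ}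
    (hA : IntegrableOn A (Set.Icc a b)) {v : ℝ → Fin m → ℂ} (hv : Continuous v) {C : ℝ}
    (hC : ∀ s, ‖v s‖ ≤ C) : IntegrableOn (fun s => A s *ᵥ v s) (Set.Icc a b) := by
  have hm : AEStronglyMeasurable (fun s => A s *ᵥ v s) (volume.restrict (Set.Icc a b)) :=
    (continuous_mulVec_pair m).comp_aestronglyMeasurable
      (hA.aestronglyMeasurable.prodMk hv.aestronglyMeasurable)
  refine Integrable.mono' (hA.norm.mul_const C) hm ?_
  filter_upwards with s
  calc ‖A s *ᵥ v s‖ ≤ ‖A s‖ * ‖v s‖ := Matrix.linfty_opNorm_mulVec _ _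
    _ ≤ ‖A s‖ * C := mul_le_mul_of_nonneg_left (hC s) (norm_nonneg _)

private lemma exists_unique_sol {a b : ℝ} (hab : a ≤ b) {m : ℕ}
    {A : ℝ → Matrix (Fin m) (Fin m) ℂ} (hA : IntegrableOn A (Set.Icc a b))
    (f : ℝ → Fin m → ℂ) (hf : IntegrableOn f (Set.Icc a b)) (c : Fin m → ℂ) :
    ∃! u : C(Set.Icc a b, Fin m → ℂ), ∀ t : Set.Icc a b,
      u t = c + ∫ s in a..(t:ℝ), (f s - A s *ᵥ (Set.IccExtend hab (⇑u)) s) := by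
  classical
  have hextc : ∀ u : C(Set.Icc a b, Fin m → ℂ), Continuous (Set.IccExtend hab (⇑u)) := fun u =>
    u.continuous.Icc_extend'
  have hextb : ∀ u : C(Set.Icc a b, Fin m → ℂ), ∀ s, ‖Set.IccExtend hab (⇑u) s‖ ≤ ‖u‖ := fun u s =>
    u.norm_coe_le_norm _
  have hextm : ∀ (u : C(Set.Icc a b, Fin m → ℂ)) (s : ℝ) (hs : s ∈ Set.Icc a b),
      Set.IccExtend hab (⇑u) s = u ⟨s, hs⟩ := fun u s hs => Set.IccExtend_of_mem hab _ hs
  have hInt : ∀ u : C(Set.Icc a b, Fin m → ℂ), IntegrableOn (fun s => f s - A s *ᵥ (Set.IccExtend hab (⇑u)) s)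
      (Set.Icc a b) := fun u =>
    hf.sub (integrableOn_mulVec hA (hextc u) (hextb u))
  have hIntII : ∀ (u : C(Set.Icc a b, Fin m → ℂ)) (t t' : ℝ), t ∈ Set.Icc a b → t' ∈ Set.Icc a b →
      IntervalIntegrable (fun s => f s - A s *ᵥ (Set.IccExtend hab (⇑u)) s) volume t t' :=
    fun u t t' ht ht' => ((hInt u).mono_set (Set.uIcc_subset_Icc ht ht')).intervalIntegrable
  -- the Picard operator
  have hTc : ∀ u : C(Set.Icc a b, Fin m → ℂ), Continuous fun t : Set.Icc a b =>
      c + ∫ s in a..(t:ℝ), (f s - A s *ᵥ (Set.IccExtend hab (⇑u)) s) := by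
    intro u
    have h1 : ContinuousOn (fun x : ℝ => ∫ s in a..x,
        (f s - A s *ᵥ (Set.IccExtend hab (⇑u)) s)) (Set.Icc a b) := by
      have := intervalIntegral.continuousOn_primitive_interval (a := a) (b := b)
        (μ := volume) (f := fun s => f s - A s *ᵥ (Set.IccExtend hab (⇑u)) s) ?_
      · rwa [Set.uIcc_of_le hab] at this
      · rw [Set.uIcc_of_le hab]; exact hInt u
    exact continuous_const.add h1.restrict
  set T : C(Set.Icc a b, Fin m → ℂ) → C(Set.Icc a b, Fin m → ℂ) := fun u => ⟨_, hTc u⟩ with hT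
  have hTval : ∀ (u : C(Set.Icc a b, Fin m → ℂ)) (t : Set.Icc a b), T u t =
      c + ∫ s in a..(t:ℝ), (f s - A s *ᵥ (Set.IccExtend hab (⇑u)) s) := fun u t => rfl
  have hfix : ∀ u : C(Set.Icc a b, Fin m → ℂ), (∀ t : Set.Icc a b,
      u t = c + ∫ s in a..(t:ℝ), (f s - A s *ᵥ (Set.IccExtend hab (⇑u)) s)) ↔ T u = u := by
    intro u
    constructor
    · intro h; ext t : 1; exact (h t).symm
    · intro h t
      have h2 := hTval u t
      rw [h] at h2
      exact h2
  -- the contraction estimate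
  set g : ℝ → ℝ := fun s => ‖A s‖ with hg
  have hg0 : ∀ s, 0 ≤ g s := fun s => norm_nonneg _
  have hgi : IntegrableOn g (Set.Icc a b) := hA.norm
  set φ : ℝ → ℝ := fun s => ∫ r in a..s, g r with hφ
  have hφmono : ∀ t t' : ℝ, t ∈ Set.Icc a b → t' ∈ Set.Icc a b → t ≤ t' → φ t ≤ φ t' := by
    intro t t' ht ht' htt'
    have h1 := intervalIntegral.integral_add_adjacent_intervals
      ((hgi.mono_set (Set.uIcc_subset_Icc (Set.left_mem_Icc.2 hab) ht)).intervalIntegrable)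
      ((hgi.mono_set (Set.uIcc_subset_Icc ht ht')).intervalIntegrable)
    have h2 : 0 ≤ ∫ s in t..t', g s := intervalIntegral.integral_nonneg htt' (fun x _ => hg0 x)
    simp only [hφ] at *
    linarith
  have hφ0 : ∀ t : ℝ, t ∈ Set.Icc a b → 0 ≤ φ t := by
    intro t ht
    have := hφmono a t (Set.left_mem_Icc.2 hab) ht ht.1
    simpa [hφ] using this
  have key : ∀ (n : ℕ) (u v : C(Set.Icc a b, Fin m → ℂ)) (t : Set.Icc a b),
      dist (T^[n] u t) (T^[n] v t) ≤ φ t ^ n / (n.factorial : ℝ) * dist u v := by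
    intro n
    induction n with
    | zero => intro u v t; simpa using ContinuousMap.dist_apply_le_dist t
    | succ n ih =>
      intro u v t
      rw [Function.iterate_succ_apply', Function.iterate_succ_apply']
      set w := T^[n] u with hw
      set w' := T^[n] v with hw'
      have habt : (t:ℝ) ∈ Set.Icc a b := t.2
      have hat : a ≤ (t:ℝ) := habt.1
      -- difference of the two integrals
      have hd : T w t - T w' t = ∫ s in a..(t:ℝ),
          A s *ᵥ (Set.IccExtend hab (⇑w') s - Set.IccExtend hab (⇑w) s) := by
        rw [hTval, hTval, add_sub_add_left_eq_sub,
          ← intervalIntegral.integral_sub (hIntII w a t (Set.left_mem_Icc.2 hab) habt)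
            (hIntII w' a t (Set.left_mem_Icc.2 hab) habt)]
        congr 1
        funext s
        rw [Matrix.mulVec_sub]
        abel
      have hdiffc : Continuous fun s => Set.IccExtend hab (⇑w') s - Set.IccExtend hab (⇑w) s :=
        (hextc w').sub (hextc w)
      have hdiffb : ∀ s, ‖Set.IccExtend hab (⇑w') s - Set.IccExtend hab (⇑w) s‖ ≤ ‖w'‖ + ‖w‖ :=
        fun s => (norm_sub_le _ _).trans (add_le_add (hextb w' s) (hextb w s))
      have hint1 : IntegrableOn (fun s =>
          A s *ᵥ (Set.IccExtend hab (⇑w') s - Set.IccExtend hab (⇑w) s)) (Set.Icc a b) :=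
        integrableOn_mulVec hA hdiffc hdiffb
      have hφcont : ContinuousOn φ (Set.Icc a b) := by
        have : Set.uIcc a b = Set.Icc a b := Set.uIcc_of_le hab
        rw [hφ]
        rw [← this] at hgi ⊢
        exact intervalIntegral.continuousOn_primitive_interval hgi
      have hint2 : IntegrableOn (fun s => g s * φ s ^ n) (Set.Icc a b) := by
        have := MeasureTheory.IntegrableOn.continuousOn_mul
          (ContinuousOn.pow hφcont n) hgi isCompact_Icc
        simpa [mul_comm] using this
      -- pointwise bound on the integrand
      have hpt : ∀ s ∈ Set.Icc a (t:ℝ),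
          ‖A s *ᵥ (Set.IccExtend hab (⇑w') s - Set.IccExtend hab (⇑w) s)‖ ≤
            g s * φ s ^ n * (dist u v / (n.factorial : ℝ)) := by
        intro s hs
        have hsab : s ∈ Set.Icc a b := ⟨hs.1, hs.2.trans habt.2⟩
        have h1 : ‖A s *ᵥ (Set.IccExtend hab (⇑w') s - Set.IccExtend hab (⇑w) s)‖ ≤
            g s * ‖Set.IccExtend hab (⇑w') s - Set.IccExtend hab (⇑w) s‖ :=
          Matrix.linfty_opNorm_mulVec _ _
        have h2 : ‖Set.IccExtend hab (⇑w') s - Set.IccExtend hab (⇑w) s‖ =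
            dist (w ⟨s, hsab⟩) (w' ⟨s, hsab⟩) := by
          rw [hextm w' s hsab, hextm w s hsab, dist_eq_norm, norm_sub_rev]
        have h3 := ih u v ⟨s, hsab⟩
        refine h1.trans ?_
        rw [h2]
        calc g s * dist (w ⟨s, hsab⟩) (w' ⟨s, hsab⟩)
            ≤ g s * (φ s ^ n / (n.factorial : ℝ) * dist u v) :=
              mul_le_mul_of_nonneg_left h3 (hg0 s)
          _ = g s * φ s ^ n * (dist u v / (n.factorial : ℝ)) := by ring
      -- put it together
      have hb1 : dist (T w t) (T w' t) ≤ ∫ s in a..(t:ℝ),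
          ‖A s *ᵥ (Set.IccExtend hab (⇑w') s - Set.IccExtend hab (⇑w) s)‖ := by
        rw [dist_eq_norm, hd]
        exact intervalIntegral.norm_integral_le_integral_norm hat
      have hb2 : (∫ s in a..(t:ℝ),
          ‖A s *ᵥ (Set.IccExtend hab (⇑w') s - Set.IccExtend hab (⇑w) s)‖) ≤
          ∫ s in a..(t:ℝ), g s * φ s ^ n * (dist u v / (n.factorial : ℝ)) := by
        refine intervalIntegral.integral_mono_on hat ?_ ?_ hpt
        · exact (MeasureTheory.IntegrableOn.mono_set hint1.norm
            (Set.uIcc_subset_Icc (Set.left_mem_Icc.2 hab) habt)).intervalIntegrable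
        · exact (MeasureTheory.IntegrableOn.mono_set (hint2.mul_const _)
            (Set.uIcc_subset_Icc (Set.left_mem_Icc.2 hab) habt)).intervalIntegrable
      have hb3 : (∫ s in a..(t:ℝ), g s * φ s ^ n * (dist u v / (n.factorial : ℝ)))
          = (∫ s in a..(t:ℝ), g s * φ s ^ n) * (dist u v / (n.factorial : ℝ)) :=
        intervalIntegral.integral_mul_const _ _
      have hb4 : (∫ s in a..(t:ℝ), g s * φ s ^ n) ≤ φ (t:ℝ) ^ (n+1) / ((n:ℝ)+1) :=
        key_ineq hat (hgi.mono_set (Set.Icc_subset_Icc_right habt.2)) hg0 n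
      have hdnn : 0 ≤ dist u v / (n.factorial : ℝ) := by positivity
      have hb5 : (∫ s in a..(t:ℝ), g s * φ s ^ n) * (dist u v / (n.factorial : ℝ)) ≤
          (φ (t:ℝ) ^ (n+1) / ((n:ℝ)+1)) * (dist u v / (n.factorial : ℝ)) :=
        mul_le_mul_of_nonneg_right hb4 hdnn
      have hb6 : (φ (t:ℝ) ^ (n+1) / ((n:ℝ)+1)) * (dist u v / (n.factorial : ℝ)) =
          φ (t:ℝ) ^ (n+1) / ((n+1).factorial : ℝ) * dist u v := by
        rw [Nat.factorial_succ]
        have h7 : (n.factorial : ℝ) ≠ 0 := by positivity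
        push_cast
        field_simp
      calc dist (T w t) (T w' t) ≤ _ := hb1
        _ ≤ _ := hb2
        _ = _ := hb3
        _ ≤ _ := hb5
        _ = _ := hb6
  -- choose an iterate that is a contraction
  haveI : Nonempty C(Set.Icc a b, Fin m → ℂ) := ⟨ContinuousMap.const _ 0⟩
  have hφb0 : 0 ≤ φ b := hφ0 b (Set.right_mem_Icc.2 hab)
  have htend := FloorSemiring.tendsto_pow_div_factorial_atTop (φ b)
  obtain ⟨n, hn⟩ := (htend.eventually_lt_const (by norm_num : (0:ℝ) < 1/2)).exists
  have hdistb : ∀ u v : C(Set.Icc a b, Fin m → ℂ),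
      dist (T^[n] u) (T^[n] v) ≤ 1/2 * dist u v := by
    intro u v
    rw [ContinuousMap.dist_le (mul_nonneg (by norm_num) dist_nonneg)]
    intro t
    refine (key n u v t).trans ?_
    have h1 : φ ↑t ≤ φ b := hφmono ↑t b t.2 (Set.right_mem_Icc.2 hab) t.2.2
    have h2 : φ ↑t ^ n / (n.factorial:ℝ) ≤ φ b ^ n / (n.factorial:ℝ) := by
      gcongr
      exact hφ0 _ t.2
    exact mul_le_mul_of_nonneg_right (h2.trans hn.le) dist_nonneg
  have hcontr : ContractingWith (1/2 : NNReal) (T^[n]) := by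
    constructor
    · rw [← NNReal.coe_lt_coe]; norm_num
    · apply LipschitzWith.of_dist_le_mul
      intro u v
      have hco : ((1/2 : NNReal) : ℝ) = 1/2 := by norm_num
      rw [hco]
      exact hdistb u v
  have hxfix : Function.IsFixedPt T (hcontr.fixedPoint (T^[n])) :=
    hcontr.isFixedPt_fixedPoint_iterate
  refine ⟨hcontr.fixedPoint (T^[n]), (hfix _).2 hxfix, ?_⟩
  intro y hy
  have hyfix : T y = y := (hfix y).1 hy
  exact hcontr.fixedPoint_unique' (Function.IsFixedPt.iterate hyfix n)
    hcontr.fixedPoint_isFixedPt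

/-- `u ∈ W¹₁([a,b], ℂ^m)` solves `u' + A u = f` a.e. on `[a,b]`, expressed in the
equivalent integral form. -/
def SolvesLinearSystem (a b : ℝ) (hab : a ≤ b) (m : ℕ)
    (A : ℝ → Matrix (Fin m) (Fin m) ℂ) (f : ℝ → Fin m → ℂ)
    (u : C(Set.Icc a b, Fin m → ℂ)) : Prop :=
  ∀ t : Set.Icc a b,
    u t = u ⟨a, Set.left_mem_Icc.mpr hab⟩ +
      ∫ s in a..(t : ℝ), (f s - A s *ᵥ (Set.IccExtend hab u) s)

set_option maxHeartbeats 1000000 in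
/-- Kiguradze's solvability criterion: the boundary-value problem
`x' + Ax = f` a.e., `Bx = q` is uniquely solvable in `W¹₁([a,b], ℂ^m)` for all
`f ∈ L¹` and `q ∈ ℂ^m` if and only if the matrix `[BY]`, whose `j`-th column is `B`
applied to the `j`-th column of the matrizant `Y` of `y' = −Ay`, is invertible. -/
theorem kiguradze_solvability_criterion
    (a b : ℝ) (hab : a < b) (m : ℕ)
    (A : ℝ → Matrix (Fin m) (Fin m) ℂ) (hA : @IntegrableOn ℝ (Matrix (Fin m) (Fin m) ℂ) _ _ SeminormedAddGroup.toContinuousENorm A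
      (Set.Icc a b) volume)
    (B : C(Set.Icc a b, Fin m → ℂ) →L[ℂ] (Fin m → ℂ))
    (Y : ℝ → Matrix (Fin m) (Fin m) ℂ)
    (hY : ∀ t ∈ Set.Icc a b, Y t = 1 - ∫ s in a..t, A s * Y s)
    (hYcont : ContinuousOn Y (Set.Icc a b))
    (M : Matrix (Fin m) (Fin m) ℂ)
    (hM : ∀ (j : Fin m) (u : C(Set.Icc a b, Fin m → ℂ)),
      (∀ t : Set.Icc a b, u t = fun i => Y (t : ℝ) i j) → (fun i => M i j) = B u) :
    (∀ (f : ℝ → Fin m → ℂ), IntegrableOn f (Set.Icc a b) → ∀ q : Fin m → ℂ,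
        ∃! u : C(Set.Icc a b, Fin m → ℂ),
          SolvesLinearSystem a b hab.le m A f u ∧ B u = q) ↔
      IsUnit M := by
  classical
  have hble : a ≤ b := hab.le
  have hamem : a ∈ Set.Icc a b := Set.left_mem_Icc.2 hble
  have hYa : Y a = 1 := by simpa using hY a hamem
  have hAY : IntegrableOn (fun s => A s * Y s) (Set.Icc a b) :=
    MeasureTheory.IntegrableOn.mul_continuousOn hA hYcont isCompact_Icc
  -- the continuous linear map `N ↦ N *ᵥ c`
  let L : (Fin m → ℂ) → (Matrix (Fin m) (Fin m) ℂ →L[ℂ] (Fin m → ℂ)) := fun c =>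
    LinearMap.toContinuousLinearMap
      { toFun := fun N => N *ᵥ c
        map_add' := fun N N' => Matrix.add_mulVec N N' c
        map_smul' := fun z N => Matrix.smul_mulVec z N c }
  have hL : ∀ (c : Fin m → ℂ) (N : Matrix (Fin m) (Fin m) ℂ), L c N = N *ᵥ c := fun _ _ => rfl
  -- homogeneous solutions
  let w : (Fin m → ℂ) → C(Set.Icc a b, Fin m → ℂ) := fun c =>
    ⟨fun t => Y (t : ℝ) *ᵥ c, ((L c).continuous.comp (hYcont.restrict) : _)⟩
  have hw_apply : ∀ c (t : Set.Icc a b), w c t = Y (t : ℝ) *ᵥ c := fun _ _ => rfl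
  have hw_a : ∀ c, w c ⟨a, hamem⟩ = c := by
    intro c; rw [hw_apply]; simp [hYa, Matrix.one_mulVec]
  have hw_sol : ∀ c (t : Set.Icc a b), w c t =
      c + ∫ s in a..(t : ℝ), ((0 : Fin m → ℂ) - A s *ᵥ (Set.IccExtend hble ⇑(w c)) s) := by
    intro c t
    have hat : a ≤ (t : ℝ) := t.2.1
    have hint : IntervalIntegrable (fun s => A s * Y s) volume a (t : ℝ) :=
      (hAY.mono_set (Set.uIcc_subset_Icc hamem t.2)).intervalIntegrable
    have hcomm := (L c).intervalIntegral_comp_comm hint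
    have hcongr : ∫ s in a..(t : ℝ), ((0 : Fin m → ℂ) - A s *ᵥ (Set.IccExtend hble ⇑(w c)) s)
        = ∫ s in a..(t : ℝ), (-(L c (A s * Y s))) := by
      refine intervalIntegral.integral_congr ?_
      intro s hs
      have hsab : s ∈ Set.Icc a b := (Set.uIcc_subset_Icc hamem t.2) hs
      show (0 : Fin m → ℂ) - A s *ᵥ (Set.IccExtend hble ⇑(w c)) s = -(L c (A s * Y s))
      rw [Set.IccExtend_of_mem hble _ hsab, hL]
      rw [hw_apply, Matrix.mulVec_mulVec]
      abel
    rw [hcongr, intervalIntegral.integral_neg]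
    erw [hcomm]
    have := hY (t : ℝ) t.2
    rw [hw_apply, this, Matrix.sub_mulVec, Matrix.one_mulVec]
    erw [hL]
    abel
  -- the value of B on homogeneous solutions
  have hBw : ∀ c, B (w c) = M *ᵥ c := by
    intro c
    let uj : Fin m → C(Set.Icc a b, Fin m → ℂ) := fun j =>
      ⟨fun t => (fun i => Y (t : ℝ) i j), by
        exact continuous_pi fun i =>
          (continuous_apply j).comp ((continuous_apply i).comp hYcont.restrict)⟩
    have hBuj : ∀ j, B (uj j) = fun i => M i j := fun j => (hM j (uj j) (fun t => rfl)).symm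
    have hdecomp : w c = ∑ j : Fin m, c j • uj j := by
      ext t i
      simp only [hw_apply, ContinuousMap.coe_sum, Finset.sum_apply, ContinuousMap.coe_smul,
        Pi.smul_apply]
      simp [Matrix.mulVec, dotProduct, uj, mul_comm]
    rw [hdecomp, map_sum]
    funext i
    simp only [_root_.map_smul]
    rw [Finset.sum_apply]
    simp only [Pi.smul_apply, hBuj]
    simp [Matrix.mulVec, dotProduct, mul_comm]
  -- helper : solutions with prescribed initial value
  have hEU : ∀ (f : ℝ → Fin m → ℂ), IntegrableOn f (Set.Icc a b) → ∀ (c : Fin m → ℂ),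
      ∃! u : C(Set.Icc a b, Fin m → ℂ), ∀ t : Set.Icc a b,
        u t = c + ∫ s in a..(t:ℝ), (f s - A s *ᵥ (Set.IccExtend hble (⇑u)) s) :=
    fun f hf c => exists_unique_sol hble hA f hf c
  constructor
  · -- solvability implies invertibility
    intro hsolv
    by_contra hMu
    have hdet : M.det = 0 := by
      by_contra hd
      exact hMu ((Matrix.isUnit_iff_isUnit_det M).2 (isUnit_iff_ne_zero.2 hd))
    obtain ⟨v, hv0, hvM⟩ := (Matrix.exists_mulVec_eq_zero_iff).2 hdet
    obtain ⟨u₀, hu₀, huniq⟩ := hsolv (fun _ => 0) integrableOn_zero 0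
    have h0sol : SolvesLinearSystem a b hble m A (fun _ => 0) 0 ∧
        B (0 : C(Set.Icc a b, Fin m → ℂ)) = 0 := by
      refine ⟨fun t => ?_, map_zero B⟩
      have hz : (fun s : ℝ => (fun _ : ℝ => (0 : Fin m → ℂ)) s -
          A s *ᵥ (Set.IccExtend hble ⇑(0 : C(Set.Icc a b, Fin m → ℂ))) s)
          = fun _ : ℝ => (0 : Fin m → ℂ) := by
        funext s
        show (0 : Fin m → ℂ) - A s *ᵥ (Set.IccExtend hble ⇑(0 : C(Set.Icc a b, Fin m → ℂ))) s = 0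
        have h1 : Set.IccExtend hble ⇑(0 : C(Set.Icc a b, Fin m → ℂ)) s = 0 := rfl
        rw [h1, Matrix.mulVec_zero, sub_zero]
      show (0 : C(Set.Icc a b, Fin m → ℂ)) t = _
      rw [hz]
      simp
    have hwsol : SolvesLinearSystem a b hble m A (fun _ => 0) (w v) ∧ B (w v) = 0 := by
      refine ⟨fun t => ?_, by rw [hBw]; exact hvM⟩
      have h2 : (w v) ⟨a, Set.left_mem_Icc.mpr hble⟩ = v := hw_a v
      rw [h2]
      exact hw_sol v t
    have : w v = 0 := (huniq (w v) hwsol).trans (huniq 0 h0sol).symm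
    apply hv0
    have := congrArg (fun u : C(Set.Icc a b, Fin m → ℂ) => u ⟨a, hamem⟩) this
    simpa [hw_a] using this
  · -- invertibility implies solvability
    intro hMu f hf q
    obtain ⟨V, hV⟩ := hMu
    obtain ⟨u₀, hu₀, huniq₀⟩ := hEU f hf 0
    have hu₀a : u₀ ⟨a, hamem⟩ = 0 := by
      have := hu₀ ⟨a, hamem⟩
      simpa using this
    -- sum of particular and homogeneous solutions
    have hsum : ∀ c : Fin m → ℂ, ∀ t : Set.Icc a b, (u₀ + w c) t =
        c + ∫ s in a..(t : ℝ), (f s - A s *ᵥ (Set.IccExtend hble ⇑(u₀ + w c)) s) := by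
      intro c t
      have hat : a ≤ (t : ℝ) := t.2.1
      have hI1 : IntervalIntegrable
          (fun s => f s - A s *ᵥ (Set.IccExtend hble ⇑u₀) s) volume a (t : ℝ) := by
        refine (MeasureTheory.IntegrableOn.mono_set ?_
          (Set.uIcc_subset_Icc hamem t.2)).intervalIntegrable
        exact hf.sub (integrableOn_mulVec hA u₀.continuous.Icc_extend'
          (fun s => u₀.norm_coe_le_norm _))
      have hI2 : IntervalIntegrable
          (fun s => (0 : Fin m → ℂ) - A s *ᵥ (Set.IccExtend hble ⇑(w c)) s) volume a (t : ℝ) := by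
        refine (MeasureTheory.IntegrableOn.mono_set ?_
          (Set.uIcc_subset_Icc hamem t.2)).intervalIntegrable
        exact (integrableOn_zero).sub (integrableOn_mulVec hA (w c).continuous.Icc_extend'
          (fun s => (w c).norm_coe_le_norm _))
      have hadd := intervalIntegral.integral_add hI1 hI2
      have hintegrand : ∀ s : ℝ, (f s - A s *ᵥ (Set.IccExtend hble ⇑u₀) s)
          + ((0 : Fin m → ℂ) - A s *ᵥ (Set.IccExtend hble ⇑(w c)) s)
          = f s - A s *ᵥ (Set.IccExtend hble ⇑(u₀ + w c)) s := by
        intro s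
        have hext : Set.IccExtend hble ⇑(u₀ + w c) s =
            Set.IccExtend hble ⇑u₀ s + Set.IccExtend hble ⇑(w c) s := rfl
        rw [hext, Matrix.mulVec_add]
        abel
      calc (u₀ + w c) t = u₀ t + w c t := rfl
        _ = (0 + ∫ s in a..(t:ℝ), (f s - A s *ᵥ (Set.IccExtend hble ⇑u₀) s))
            + (c + ∫ s in a..(t:ℝ), ((0:Fin m → ℂ) - A s *ᵥ (Set.IccExtend hble ⇑(w c)) s)) := by
              rw [← hu₀ t, ← hw_sol c t]
        _ = c + (∫ s in a..(t:ℝ), ((f s - A s *ᵥ (Set.IccExtend hble ⇑u₀) s)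
              + ((0:Fin m → ℂ) - A s *ᵥ (Set.IccExtend hble ⇑(w c)) s))) := by
              rw [hadd]; abel
        _ = _ := by
              congr 1
              exact intervalIntegral.integral_congr (fun s _ => hintegrand s)
    -- the candidate solution
    set c₀ : Fin m → ℂ := (↑V⁻¹ : Matrix (Fin m) (Fin m) ℂ) *ᵥ (q - B u₀) with hc₀
    have hMc₀ : M *ᵥ c₀ = q - B u₀ := by
      rw [hc₀, Matrix.mulVec_mulVec, ← hV, Units.mul_inv, Matrix.one_mulVec]
    refine ⟨u₀ + w c₀, ⟨?_, ?_⟩, ?_⟩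
    · -- it solves the system
      intro t
      have h1 := hsum c₀ t
      have h2 : (u₀ + w c₀) ⟨a, hamem⟩ = c₀ := by
        have : (u₀ + w c₀) ⟨a, hamem⟩ = u₀ ⟨a, hamem⟩ + w c₀ ⟨a, hamem⟩ := rfl
        rw [this, hu₀a, hw_a, zero_add]
      rw [h2]
      exact h1
    · -- boundary condition
      have : B (u₀ + w c₀) = B u₀ + B (w c₀) := map_add B _ _
      rw [this, hBw, hMc₀]
      abel
    · -- uniqueness
      rintro y ⟨hy_sol, hy_q⟩
      set cy := y ⟨a, hamem⟩ with hcy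
      have hy_fix : ∀ t : Set.Icc a b, y t =
          cy + ∫ s in a..(t : ℝ), (f s - A s *ᵥ (Set.IccExtend hble ⇑y) s) := hy_sol
      have hy_eq : y = u₀ + w cy := by
        obtain ⟨z, hz, hzuniq⟩ := hEU f hf cy
        rw [hzuniq y hy_fix, hzuniq (u₀ + w cy) (hsum cy)]
      have hBy : B y = B u₀ + M *ᵥ cy := by
        rw [hy_eq, map_add, hBw]
      have hMcy : M *ᵥ cy = q - B u₀ := by
        have h5 : B u₀ + M *ᵥ cy = q := hBy.symm.trans hy_q
        rw [← h5]
        abel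
      have hcyc₀ : cy = c₀ := by
        have h3 : M *ᵥ cy = M *ᵥ c₀ := by rw [hMc₀, hMcy]
        have h4 : (↑V⁻¹ : Matrix (Fin m) (Fin m) ℂ) *ᵥ (M *ᵥ cy)
            = (↑V⁻¹ : Matrix (Fin m) (Fin m) ℂ) *ᵥ (M *ᵥ c₀) := congrArg _ h3
        have h6 : (↑V⁻¹ : Matrix (Fin m) (Fin m) ℂ) * M = 1 := by rw [← hV]; exact V.inv_mul
        rw [Matrix.mulVec_mulVec, Matrix.mulVec_mulVec, h6, Matrix.one_mulVec,
          Matrix.one_mulVec] at h4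
        exact h4
      rw [hy_eq, hcyc₀]
end

section
/- Under the assumptions of the previous solvability criterion with [BY] invertible, the unique solution of x' + Ax = f a.e., Bx = q is x(t) = Y(t)[BY]⁻¹ q + Y(t) h(f) + R(t,f), where R(t,f) = Y(t)∫_a^t Y(τ)⁻¹ f(τ) dτ and h(f) = −[BY]⁻¹ B R(·,f). -/
open MeasureTheory Matrix

attribute [local instance] Matrix.linftyOpNormedAddCommGroup Matrix.linftyOpNormedRing
  Matrix.linftyOpNormedSpace

@[reducible] noncomputable def solRepMatTop (m : ℕ) : TopologicalSpace (Matrix (Fin m) (Fin m) ℂ) :=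
  @UniformSpace.toTopologicalSpace _ (@PseudoMetricSpace.toUniformSpace _ (@SeminormedAddGroup.toPseudoMetricSpace _ inferInstance))

section SolRepAux
attribute [local instance 2000] solRepMatTop
open Set Filter Topology

noncomputable def mulVecL (m : ℕ) :
    Matrix (Fin m) (Fin m) ℂ →L[ℂ] (Fin m → ℂ) →L[ℂ] (Fin m → ℂ) :=
  LinearMap.toContinuousLinearMap
    ((LinearMap.toContinuousLinearMap.toLinearMap).comp (Matrix.toLin' (R := ℂ)).toLinearMap)

@[simp] lemma mulVecL_apply {m : ℕ} (M : Matrix (Fin m) (Fin m) ℂ) (v : Fin m → ℂ) :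
    mulVecL m M v = M *ᵥ v := by
  simp [mulVecL, Matrix.toLin'_apply]

lemma aesm_mulVec {m : ℕ} {μ : Measure ℝ} {A : ℝ → Matrix (Fin m) (Fin m) ℂ}
    {w : ℝ → Fin m → ℂ} (hA : AEStronglyMeasurable A μ) (hw : AEStronglyMeasurable w μ) :
    AEStronglyMeasurable (fun s => A s *ᵥ w s) μ := by
  have h := (mulVecL m).aestronglyMeasurable_comp₂ hA hw
  simp only [mulVecL_apply] at h
  exact h

lemma aesm_matmul {m : ℕ} {μ : Measure ℝ} {A W : ℝ → Matrix (Fin m) (Fin m) ℂ}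
    (hA : AEStronglyMeasurable A μ) (hW : AEStronglyMeasurable W μ) :
    AEStronglyMeasurable (fun s => A s * W s) μ := by
  simpa using (ContinuousLinearMap.mul ℂ
    (Matrix (Fin m) (Fin m) ℂ)).aestronglyMeasurable_comp₂ hA hW

lemma int_mulVec {m : ℕ} {s : Set ℝ} (hs : MeasurableSet s) {A : ℝ → Matrix (Fin m) (Fin m) ℂ}
    {w : ℝ → Fin m → ℂ} (hA : AEStronglyMeasurable A (volume.restrict s))
    (hw : AEStronglyMeasurable w (volume.restrict s)) {φ : ℝ → ℝ}
    (hφ : IntegrableOn φ s) (hb : ∀ r ∈ s, ‖A r‖ * ‖w r‖ ≤ φ r) :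
    IntegrableOn (fun r => A r *ᵥ w r) s := by
  refine Integrable.mono' hφ (aesm_mulVec hA hw) ?_
  filter_upwards [ae_restrict_mem hs] with r hr
  exact (Matrix.linfty_opNorm_mulVec _ _).trans (hb r hr)

lemma int_matmul {m : ℕ} {s : Set ℝ} (hs : MeasurableSet s) {A W : ℝ → Matrix (Fin m) (Fin m) ℂ}
    (hA : AEStronglyMeasurable A (volume.restrict s))
    (hW : AEStronglyMeasurable W (volume.restrict s)) {φ : ℝ → ℝ}
    (hφ : IntegrableOn φ s) (hb : ∀ r ∈ s, ‖A r‖ * ‖W r‖ ≤ φ r) :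
    IntegrableOn (fun r => A r * W r) s := by
  refine Integrable.mono' hφ (aesm_matmul hA hW) ?_
  filter_upwards [ae_restrict_mem hs] with r hr
  exact (norm_mul_le _ _).trans (hb r hr)

lemma II {E : Type*} [NormedAddCommGroup E] {g : ℝ → E} {α β c d : ℝ}
    (hg : IntegrableOn g (Set.Icc α β)) (hc : c ∈ Set.Icc α β) (hd : d ∈ Set.Icc α β) :
    IntervalIntegrable g volume c d :=
  (hg.mono_set (uIcc_subset_Icc hc hd)).intervalIntegrable

lemma gronwall0 {m : ℕ} {α β : ℝ} (hαβ : α ≤ β) {A : ℝ → Matrix (Fin m) (Fin m) ℂ}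
    (hA : IntegrableOn A (Set.Icc α β)) {v : ℝ → Fin m → ℂ}
    (hv : ContinuousOn v (Set.Icc α β))
    (h : ∀ t ∈ Set.Icc α β, v t = -∫ s in α..t, A s *ᵥ v s) :
    ∀ t ∈ Set.Icc α β, v t = 0 := by
  obtain ⟨C, hC⟩ := isCompact_Icc.exists_bound_of_continuousOn hv
  have hvm : AEStronglyMeasurable v (volume.restrict (Icc α β)) :=
    hv.aestronglyMeasurable measurableSet_Icc
  have hint : IntegrableOn (fun s => A s *ᵥ v s) (Icc α β) :=
    int_mulVec measurableSet_Icc hA.aestronglyMeasurable hvm (hA.norm.mul_const C)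
      (fun r hr => mul_le_mul_of_nonneg_left (hC r hr) (norm_nonneg _))
  have hAn : IntegrableOn (fun s => ‖A s‖) (Icc α β) := hA.norm
  have hii : ∀ c ∈ Icc α β, ∀ d ∈ Icc α β,
      IntervalIntegrable (fun s => A s *ᵥ v s) volume c d := fun c hc d hd =>
    (hint.mono_set (uIcc_subset_Icc hc hd)).intervalIntegrable
  have hiiA : ∀ c ∈ Icc α β, ∀ d ∈ Icc α β,
      IntervalIntegrable (fun s => ‖A s‖) volume c d := fun c hc d hd =>
    ((hAn.mono_set (uIcc_subset_Icc hc hd))).intervalIntegrable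
  set S := {t | t ∈ Icc α β ∧ ∀ s ∈ Icc α t, v s = 0} with hSdef
  have hS0 : α ∈ S := by
    refine ⟨left_mem_Icc.mpr hαβ, fun s hs => ?_⟩
    have : s = α := le_antisymm hs.2 hs.1
    subst this
    rw [h s (left_mem_Icc.mpr hαβ), intervalIntegral.integral_same, neg_zero]
  have hSb : BddAbove S := ⟨β, fun t ht => ht.1.2⟩
  set T := sSup S with hTdef
  have hαT : α ≤ T := le_csSup hSb hS0
  have hTβ : T ≤ β := csSup_le ⟨α, hS0⟩ fun t ht => ht.1.2
  have hvz : ∀ s, α ≤ s → s < T → v s = 0 := by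
    intro s h1 h2
    obtain ⟨t, htS, hst⟩ := exists_lt_of_lt_csSup ⟨α, hS0⟩ h2
    exact htS.2 s ⟨h1, hst.le⟩
  have hvT : v T = 0 := by
    rcases eq_or_lt_of_le hαT with hEq | hlt
    · rw [← hEq]; exact hS0.2 α ⟨le_rfl, le_rfl⟩
    · have hTmem : T ∈ Icc α β := ⟨hαT, hTβ⟩
      have hc : ContinuousWithinAt v (Ico α T) T :=
        (hv T hTmem).mono ((Ico_subset_Icc_self).trans (Icc_subset_Icc_right hTβ))
      have hne : (𝓝[Ico α T] T).NeBot := by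
        rw [← mem_closure_iff_nhdsWithin_neBot, closure_Ico hlt.ne]
        exact ⟨hlt.le, le_rfl⟩
      have h0 : Tendsto v (𝓝[Ico α T] T) (𝓝 0) := by
        refine (tendsto_congr' ?_).mpr tendsto_const_nhds
        exact eventually_nhdsWithin_of_forall fun s hs => hvz s hs.1 hs.2
      exact tendsto_nhds_unique hc.tendsto h0
  have hTS : T ∈ S := ⟨⟨hαT, hTβ⟩, fun s hs =>
    hs.2.eq_or_lt.elim (fun he => he ▸ hvT) (hvz s hs.1)⟩
  suffices hβT : β ≤ T by
    intro t ht; exact hTS.2 t ⟨ht.1, ht.2.trans hβT⟩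
  by_contra hβT
  push_neg at hβT
  have hΦcont : ContinuousOn (fun u => ∫ s in T..u, ‖A s‖) (Icc T β) := by
    have hsub : uIcc T β ⊆ Icc α β := by
      rw [uIcc_of_le hβT.le]; exact Icc_subset_Icc hαT le_rfl
    have := intervalIntegral.continuousOn_primitive_interval
      (a := T) (b := β) (μ := volume) (f := fun s => ‖A s‖) (hAn.mono_set hsub)
    rwa [uIcc_of_le hβT.le] at this
  obtain ⟨δ, hδ, hΦ⟩ := Metric.continuousWithinAt_iff.mp
    (hΦcont T (left_mem_Icc.mpr hβT.le)) (1/2) one_half_pos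
  set t₁ := min β (T + δ/2) with ht₁def
  have ht₁1 : T < t₁ := lt_min hβT (by linarith)
  have ht₁2 : t₁ ≤ β := min_le_left _ _
  have ht₁mem : t₁ ∈ Icc T β := ⟨ht₁1.le, ht₁2⟩
  have hΦt₁ : ∫ s in T..t₁, ‖A s‖ < 1/2 := by
    have hd : dist t₁ T < δ := by
      rw [Real.dist_eq, abs_of_pos (by linarith)]
      have : t₁ ≤ T + δ/2 := min_le_right _ _
      linarith
    have := hΦ ht₁mem hd
    rw [intervalIntegral.integral_same, dist_zero_right] at this
    exact (le_abs_self _).trans_lt (by rwa [Real.norm_eq_abs] at this)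
  have hsub' : Icc T t₁ ⊆ Icc α β := Icc_subset_Icc hαT ht₁2
  obtain ⟨z, hz, hzmax⟩ := isCompact_Icc.exists_isMaxOn (nonempty_Icc.mpr ht₁1.le)
    (continuous_norm.comp_continuousOn (hv.mono hsub'))
  have hzmem : z ∈ Icc α β := hsub' hz
  have hTmem : T ∈ Icc α β := ⟨hαT, hTβ⟩
  have ht₁mem' : t₁ ∈ Icc α β := ⟨hαT.trans ht₁1.le, ht₁2⟩
  have hzero1 : ∫ s in α..T, A s *ᵥ v s = 0 := by
    rw [intervalIntegral.integral_congr (g := fun _ => (0 : Fin m → ℂ))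
      (fun s hs => by
        rw [uIcc_of_le hαT] at hs
        rw [hTS.2 s hs, Matrix.mulVec_zero])]
    simp
  have hKb : ‖v z‖ ≤ (∫ s in T..t₁, ‖A s‖) * ‖v z‖ := by
    have h1 : ‖v z‖ ≤ ∫ s in T..z, ‖A s *ᵥ v s‖ := by
      have hvz' : v z = -∫ s in T..z, A s *ᵥ v s := by
        rw [h z hzmem, ← intervalIntegral.integral_add_adjacent_intervals
          (hii α (left_mem_Icc.mpr hαβ) T hTmem) (hii T hTmem z hzmem), hzero1, zero_add]
      rw [hvz', norm_neg]
      exact intervalIntegral.norm_integral_le_integral_norm hz.1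
    have h2 : ∫ s in T..z, ‖A s *ᵥ v s‖ ≤ ∫ s in T..z, ‖A s‖ * ‖v z‖ := by
      refine intervalIntegral.integral_mono_on hz.1 (hii T hTmem z hzmem).norm
        ((hiiA T hTmem z hzmem).mul_const _) fun s hs => ?_
      refine (Matrix.linfty_opNorm_mulVec _ _).trans
        (mul_le_mul_of_nonneg_left ?_ (norm_nonneg _))
      exact hzmax ⟨hs.1, hs.2.trans hz.2⟩
    have h3 : ∫ s in T..z, ‖A s‖ * ‖v z‖ = (∫ s in T..z, ‖A s‖) * ‖v z‖ :=
      intervalIntegral.integral_mul_const _ _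
    have h4 : ∫ s in T..z, ‖A s‖ ≤ ∫ s in T..t₁, ‖A s‖ := by
      refine intervalIntegral.integral_mono_interval le_rfl hz.1 hz.2 ?_
        (hiiA T hTmem t₁ ht₁mem')
      filter_upwards with s using norm_nonneg _
    calc ‖v z‖ ≤ ∫ s in T..z, ‖A s *ᵥ v s‖ := h1
      _ ≤ (∫ s in T..z, ‖A s‖) * ‖v z‖ := h2.trans_eq h3
      _ ≤ (∫ s in T..t₁, ‖A s‖) * ‖v z‖ :=
        mul_le_mul_of_nonneg_right h4 (norm_nonneg _)
  have hK0 : ‖v z‖ ≤ 0 := by nlinarith [norm_nonneg (v z)]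
  have hvz2 : ∀ s ∈ Icc T t₁, v s = 0 := fun s hs =>
    norm_le_zero_iff.mp ((hzmax hs).trans hK0)
  have ht₁S : t₁ ∈ S := by
    refine ⟨ht₁mem', fun s hs => ?_⟩
    by_cases hsT : s ≤ T
    · exact hTS.2 s ⟨hs.1, hsT⟩
    · exact hvz2 s ⟨(not_le.mp hsT).le, hs.2⟩
  exact absurd (le_csSup hSb ht₁S) (not_le.mpr ht₁1)


lemma gronwall1 {m : ℕ} {α β : ℝ} (hαβ : α ≤ β) {A : ℝ → Matrix (Fin m) (Fin m) ℂ}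
    (hA : IntegrableOn A (Set.Icc α β)) {v : ℝ → Fin m → ℂ}
    (hv : ContinuousOn v (Set.Icc α β))
    (h : ∀ t ∈ Set.Icc α β, v t = -∫ s in β..t, A s *ᵥ v s) :
    ∀ t ∈ Set.Icc α β, v t = 0 := by
  set c := α + β with hc
  have hmaps : ∀ x ∈ Icc α β, c - x ∈ Icc α β := fun x hx =>
    ⟨by simp only [hc]; linarith [hx.2], by simp only [hc]; linarith [hx.1]⟩
  have hA' : IntegrableOn (fun x => -(A (c - x))) (Set.Icc α β) := by
    have h1 : IntervalIntegrable A volume α β :=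
      (intervalIntegrable_iff_integrableOn_Icc_of_le hαβ).mpr hA
    have h2 := (h1.comp_sub_left c).neg
    have h3 : c - α = β := by rw [hc]; ring
    have h4 : c - β = α := by rw [hc]; ring
    rw [h3, h4] at h2
    exact (intervalIntegrable_iff_integrableOn_Icc_of_le hαβ).mp h2.symm
  have hv' : ContinuousOn (fun x => v (c - x)) (Set.Icc α β) :=
    hv.comp (continuous_const.sub continuous_id).continuousOn hmaps
  have key : ∀ t ∈ Set.Icc α β, v (c - t) = 0 := by
    refine gronwall0 hαβ hA' hv' fun t ht => ?_
    show v (c - t) = -∫ s in α..t, (-(A (c - s))) *ᵥ v (c - s)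
    have h3 : c - α = β := by rw [hc]; ring
    have e2 : (∫ s in α..t, (-(A (c - s))) *ᵥ v (c - s))
        = ∫ s in β..(c - t), A s *ᵥ v s := by
      simp only [Matrix.neg_mulVec]
      rw [intervalIntegral.integral_neg,
        intervalIntegral.integral_comp_sub_left (fun s => A s *ᵥ v s) c, h3,
        intervalIntegral.integral_symm, neg_neg]
    rw [e2]
    exact h _ (hmaps t ht)
  intro t ht
  have := key (c - t) (hmaps t ht)
  simpa [hc] using this


lemma triangle_swap {m : ℕ} {a t : ℝ} (hat : a ≤ t) {P : ℝ → Matrix (Fin m) (Fin m) ℂ}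
    {k : ℝ → Fin m → ℂ} (hP : IntegrableOn P (Set.Icc a t)) (hk : IntegrableOn k (Set.Icc a t)) :
    ∫ s in a..t, P s *ᵥ (∫ τ in a..s, k τ) = ∫ τ in a..t, (∫ s in τ..t, P s) *ᵥ k τ := by
  have hPo : IntegrableOn P (Ioc a t) := hP.mono_set Ioc_subset_Icc_self
  have hko : IntegrableOn k (Ioc a t) := hk.mono_set Ioc_subset_Icc_self
  set H : ℝ → ℝ → (Fin m → ℂ) := fun s τ => if τ ≤ s then P s *ᵥ k τ else 0 with hH
  have hHint : Integrable (Function.uncurry H)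
      ((volume.restrict (Ioc a t)).prod (volume.restrict (Ioc a t))) := by
    have hmeas : AEStronglyMeasurable (Function.uncurry H)
        ((volume.restrict (Ioc a t)).prod (volume.restrict (Ioc a t))) := by
      have h1 : AEStronglyMeasurable (fun p : ℝ × ℝ => P p.1 *ᵥ k p.2)
          ((volume.restrict (Ioc a t)).prod (volume.restrict (Ioc a t))) := by
        have h := (mulVecL m).aestronglyMeasurable_comp₂
          hPo.aestronglyMeasurable.comp_fst hko.aestronglyMeasurable.comp_snd
        simp only [mulVecL_apply] at h
        exact h
      have h2 : MeasurableSet {p : ℝ × ℝ | p.2 ≤ p.1} :=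
        measurableSet_le measurable_snd measurable_fst
      have : Function.uncurry H = {p : ℝ × ℝ | p.2 ≤ p.1}.indicator
          (fun p : ℝ × ℝ => P p.1 *ᵥ k p.2) := by
        funext p
        by_cases hp : p.2 ≤ p.1 <;>
          simp [Function.uncurry, hH, hp, Set.indicator_of_mem, Set.indicator_of_notMem,
            Set.mem_setOf_eq]
      rw [this]
      exact h1.indicator h2
    refine Integrable.mono' ((hPo.norm).mul_prod (hko.norm)) hmeas ?_
    refine Filter.Eventually.of_forall fun p => ?_
    by_cases hp : p.2 ≤ p.1
    · simpa [Function.uncurry, hH, hp] using Matrix.linfty_opNorm_mulVec (P p.1) (k p.2)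
    · simp [Function.uncurry, hH, hp]
      positivity
  have lhs_eq : ∫ s in a..t, P s *ᵥ (∫ τ in a..s, k τ)
      = ∫ s in Ioc a t, ∫ τ in Ioc a t, H s τ := by
    rw [intervalIntegral.integral_of_le hat]
    refine setIntegral_congr_fun measurableSet_Ioc fun s hs => ?_
    have h1 : P s *ᵥ (∫ τ in a..s, k τ) = ∫ τ in Ioc a s, P s *ᵥ k τ := by
      rw [intervalIntegral.integral_of_le hs.1.le]
      simpa using (ContinuousLinearMap.integral_comp_comm (mulVecL m (P s))
        (hko.mono_set (Ioc_subset_Ioc le_rfl hs.2))).symm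
    rw [h1]
    have h2 : ∫ τ in Ioc a t, H s τ = ∫ τ in Ioc a t ∩ Ioc a s, P s *ᵥ k τ := by
      have : ∫ τ in Ioc a t, H s τ = ∫ τ in Ioc a t, (Ioc a s).indicator (fun τ => P s *ᵥ k τ) τ := by
        refine setIntegral_congr_fun measurableSet_Ioc fun τ hτ => ?_
        by_cases hτs : τ ≤ s
        · simp [hH, hτs, Set.indicator_of_mem, Set.mem_Ioc, hτ.1]
        · simp [hH, hτs, Set.indicator_of_notMem, Set.mem_Ioc]
      rw [this, setIntegral_indicator measurableSet_Ioc]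
    rw [h2, Set.Ioc_inter_Ioc, max_self, min_eq_right hs.2]
  have rhs_eq : ∫ τ in Ioc a t, ∫ s in Ioc a t, H s τ
      = ∫ τ in a..t, (∫ s in τ..t, P s) *ᵥ k τ := by
    rw [intervalIntegral.integral_of_le hat]
    refine setIntegral_congr_fun measurableSet_Ioc fun τ hτ => ?_
    have h1 : ∫ s in Ioc a t, H s τ = ∫ s in Ioc a t ∩ Ici τ, P s *ᵥ k τ := by
      have e : ∫ s in Ioc a t, H s τ
          = ∫ s in Ioc a t, (Ici τ).indicator (fun s => P s *ᵥ k τ) s := by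
        refine setIntegral_congr_fun measurableSet_Ioc fun s hs => ?_
        by_cases hτs : τ ≤ s
        · simp [hH, hτs, Set.indicator_of_mem, Set.mem_Ici]
        · simp [hH, hτs, Set.indicator_of_notMem, Set.mem_Ici]
      rw [e, setIntegral_indicator measurableSet_Ici]
    have h2 : Ioc a t ∩ Ici τ = Icc τ t := by
      ext s
      simp only [Set.mem_inter_iff, Set.mem_Ioc, Set.mem_Ici, Set.mem_Icc]
      exact ⟨fun ⟨⟨_, h2⟩, h3⟩ => ⟨h3, h2⟩, fun ⟨h1, h2⟩ => ⟨⟨lt_of_lt_of_le hτ.1 h1, h2⟩, h1⟩⟩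
    have h3 : ∫ s in Icc τ t, P s *ᵥ k τ = ∫ s in τ..t, P s *ᵥ k τ := by
      rw [integral_Icc_eq_integral_Ioc, intervalIntegral.integral_of_le hτ.2]
    have h4 : ∫ s in τ..t, P s *ᵥ k τ = (∫ s in τ..t, P s) *ᵥ k τ := by
      have hPi : IntervalIntegrable P volume τ t :=
        (hP.mono_set (Set.uIcc_subset_Icc ⟨hτ.1.le, hτ.2⟩ ⟨hat, le_rfl⟩)).intervalIntegrable
      have := ContinuousLinearMap.intervalIntegral_comp_comm ((mulVecL m).flip (k τ)) hPi
      simpa using this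
    rw [h1, h2, h3, h4]
  rw [lhs_eq, ← rhs_eq]
  exact integral_integral_swap hHint

end SolRepAux

/-- Solution representation: if `[BY]` is invertible, the unique solution of
`x' + Ax = f` a.e., `Bx = q` is
`x(t) = Y(t)[BY]⁻¹ q + Y(t) h(f) + R(t,f)` with `R(t,f) = Y(t)∫_a^t Y⁻¹ f` and
`h(f) = −[BY]⁻¹ B R(·,f)`. -/
theorem solution_representation
    (a b : ℝ) (hab : a < b) (m : ℕ)
    (A : ℝ → Matrix (Fin m) (Fin m) ℂ) (hA : @IntegrableOn _ _ _ _ SeminormedAddGroup.toContinuousENorm A (Set.Icc a b) volume)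
    (f : ℝ → Fin m → ℂ) (hf : IntegrableOn f (Set.Icc a b)) (q : Fin m → ℂ)
    (B : C(Set.Icc a b, Fin m → ℂ) →L[ℂ] (Fin m → ℂ))
    (Y : ℝ → Matrix (Fin m) (Fin m) ℂ)
    (hY : ∀ t ∈ Set.Icc a b, Y t = 1 - ∫ s in a..t, A s * Y s)
    (hYcont : ContinuousOn Y (Set.Icc a b))
    (M : Matrix (Fin m) (Fin m) ℂ)
    (hM : ∀ (j : Fin m) (u : C(Set.Icc a b, Fin m → ℂ)),
      (∀ t : Set.Icc a b, u t = fun i => Y (t : ℝ) i j) → (fun i => M i j) = B u)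
    (hMinv : IsUnit M)
    (uR : C(Set.Icc a b, Fin m → ℂ))
    (huR : ∀ t : Set.Icc a b, uR t = Y (t : ℝ) *ᵥ (∫ τ in a..(t : ℝ), (Y τ)⁻¹ *ᵥ f τ))
    (x : C(Set.Icc a b, Fin m → ℂ))
    (hx : SolvesLinearSystem a b hab.le m A f x) (hxq : B x = q) :
    ∀ t : Set.Icc a b,
      x t = Y (t : ℝ) *ᵥ (M⁻¹ *ᵥ q) + Y (t : ℝ) *ᵥ (-(M⁻¹ *ᵥ B uR)) + uR t := by
  letI : TopologicalSpace (Matrix (Fin m) (Fin m) ℂ) := solRepMatTop m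
  replace hYcont : ContinuousOn Y (Set.Icc a b) := hYcont
  have haJ : a ∈ Set.Icc a b := Set.left_mem_Icc.mpr hab.le
  have hbJ : b ∈ Set.Icc a b := Set.right_mem_Icc.mpr hab.le
  set c : Fin m → ℂ := x ⟨a, haJ⟩ with hcdef
  set xb : ℝ → Fin m → ℂ := Set.IccExtend hab.le ⇑x with hxbdef
  set ub : ℝ → Fin m → ℂ := Set.IccExtend hab.le ⇑uR with hubdef
  have hxbc : Continuous xb := x.continuous.Icc_extend'
  have hubc : Continuous ub := uR.continuous.Icc_extend'
  have hxbv : ∀ t (ht : t ∈ Set.Icc a b), xb t = x ⟨t, ht⟩ := fun t ht =>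
    Set.IccExtend_of_mem _ _ ht
  have hubv : ∀ t (ht : t ∈ Set.Icc a b), ub t = uR ⟨t, ht⟩ := fun t ht =>
    Set.IccExtend_of_mem _ _ ht
  have hYm : AEStronglyMeasurable Y (volume.restrict (Set.Icc a b)) :=
    hYcont.aestronglyMeasurable measurableSet_Icc
  obtain ⟨CY, hCY⟩ := isCompact_Icc.exists_bound_of_continuousOn hYcont
  have hAY : IntegrableOn (fun s => A s * Y s) (Set.Icc a b) :=
    int_matmul measurableSet_Icc hA.aestronglyMeasurable hYm (hA.norm.mul_const CY)
      (fun r hr => mul_le_mul_of_nonneg_left (hCY r hr) (norm_nonneg _))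
  -- the homogeneous-equation identity, for any constant vector w
  have hYw : ∀ (w : Fin m → ℂ), ∀ s ∈ Set.Icc a b,
      Y s *ᵥ w = w - ∫ τ in a..s, A τ *ᵥ (Y τ *ᵥ w) := by
    intro w s hs
    have h1 := congrArg (fun N => N *ᵥ w) (hY s hs)
    simp only [Matrix.sub_mulVec, Matrix.one_mulVec] at h1
    have h2 : (∫ τ in a..s, A τ * Y τ) *ᵥ w = ∫ τ in a..s, (A τ * Y τ) *ᵥ w := by
      simpa using
        (ContinuousLinearMap.intervalIntegral_comp_comm ((mulVecL m).flip w)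
          (II hAY haJ hs)).symm
    rw [h2] at h1
    simp_rw [← Matrix.mulVec_mulVec] at h1
    exact h1
  have hYwint : ∀ (w : Fin m → ℂ),
      IntegrableOn (fun τ => A τ *ᵥ (Y τ *ᵥ w)) (Set.Icc a b) := by
    intro w
    refine int_mulVec measurableSet_Icc hA.aestronglyMeasurable
      (aesm_mulVec hYm aestronglyMeasurable_const) (hA.norm.mul_const (CY * ‖w‖))
      (fun r hr => mul_le_mul_of_nonneg_left ?_ (norm_nonneg _))
    exact (Matrix.linfty_opNorm_mulVec _ _).trans
      (mul_le_mul_of_nonneg_right (hCY r hr) (norm_nonneg _))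
  have hYa : Y a = 1 := by
    rw [hY a haJ, intervalIntegral.integral_same, sub_zero]
  -- invertibility of Y on [a, b]
  have hdet : ∀ t ∈ Set.Icc a b, IsUnit (Y t) := by
    intro t₀ ht₀
    rw [Matrix.isUnit_iff_isUnit_det, isUnit_iff_ne_zero]
    intro hdet0
    obtain ⟨w, hw0, hw⟩ := Matrix.exists_mulVec_eq_zero_iff.mpr hdet0
    have hsubJ : Set.Icc a t₀ ⊆ Set.Icc a b := Set.Icc_subset_Icc le_rfl ht₀.2
    have heq : ∀ s ∈ Set.Icc a t₀,
        (fun r => Y r *ᵥ w) s = -∫ τ in t₀..s, A τ *ᵥ (Y τ *ᵥ w) := by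
      intro s hs
      have h1 := hYw w s (hsubJ hs)
      have h2 := hYw w t₀ ht₀
      rw [hw] at h2
      have hw2 : w = ∫ τ in a..t₀, A τ *ᵥ (Y τ *ᵥ w) := by
        have := h2.symm
        rwa [sub_eq_zero] at this
      have h3 : (∫ τ in a..s, A τ *ᵥ (Y τ *ᵥ w)) - ∫ τ in a..t₀, A τ *ᵥ (Y τ *ᵥ w)
          = ∫ τ in t₀..s, A τ *ᵥ (Y τ *ᵥ w) :=
        intervalIntegral.integral_interval_sub_left (II (hYwint w) haJ (hsubJ hs))
          (II (hYwint w) haJ ht₀)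
      simp only
      rw [h1, ← h3, ← hw2]
      abel
    have hvcont : ContinuousOn (fun r => Y r *ᵥ w) (Set.Icc a t₀) := by
      have : ContinuousOn (fun r => ((mulVecL m).flip w) (Y r)) (Set.Icc a b) :=
        ((mulVecL m).flip w).continuous.comp_continuousOn hYcont
      simpa using this.mono hsubJ
    have hva := gronwall1 ht₀.1 (hA.mono_set hsubJ) hvcont heq a (Set.left_mem_Icc.mpr ht₀.1)
    simp only [hYa, Matrix.one_mulVec] at hva
    exact hw0 hva
  -- continuity of Y⁻¹ on [a, b]
  have hdet0 : ∀ t ∈ Set.Icc a b, (Y t).det ≠ 0 := fun t ht =>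
    ((Matrix.isUnit_iff_isUnit_det _).mp (hdet t ht)).ne_zero
  have hYinvcont : ContinuousOn (fun τ => (Y τ)⁻¹) (Set.Icc a b) := by
    have e : ∀ τ, (Y τ)⁻¹ = ((Y τ).det)⁻¹ • (Y τ).adjugate := by
      intro τ; rw [Matrix.inv_def, Ring.inverse_eq_inv']
    simp only [e]
    refine ContinuousOn.smul (ContinuousOn.inv₀ ?_ hdet0) ?_
    · exact (continuous_id.matrix_det).comp_continuousOn hYcont
    · exact (continuous_id.matrix_adjugate).comp_continuousOn hYcont
  obtain ⟨CI, hCI⟩ := isCompact_Icc.exists_bound_of_continuousOn hYinvcont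
  have hk : IntegrableOn (fun τ => (Y τ)⁻¹ *ᵥ f τ) (Set.Icc a b) := by
    refine int_mulVec measurableSet_Icc
      (hYinvcont.aestronglyMeasurable measurableSet_Icc) hf.aestronglyMeasurable
      (hf.norm.const_mul CI) (fun r hr => ?_)
    exact mul_le_mul_of_nonneg_right (hCI r hr) (norm_nonneg _)
  have hubv2 : ∀ t (ht : t ∈ Set.Icc a b),
      ub t = Y t *ᵥ (∫ τ in a..t, (Y τ)⁻¹ *ᵥ f τ) := fun t ht => by
    rw [hubv t ht, huR ⟨t, ht⟩]
  -- ub is bounded and A *ᵥ ub integrable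
  obtain ⟨CU, hCU⟩ := isCompact_Icc.exists_bound_of_continuousOn
    (hubc.continuousOn (s := Set.Icc a b))
  have hAub : IntegrableOn (fun s => A s *ᵥ ub s) (Set.Icc a b) :=
    int_mulVec measurableSet_Icc hA.aestronglyMeasurable
      (hubc.aestronglyMeasurable.restrict) (hA.norm.mul_const CU)
      (fun r hr => mul_le_mul_of_nonneg_left (hCU r hr) (norm_nonneg _))
  -- the inhomogeneous particular solution equation
  have huReq : ∀ t ∈ Set.Icc a b,
      ub t = (∫ s in a..t, f s) - ∫ s in a..t, A s *ᵥ ub s := by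
    intro t ht
    have hat : a ≤ t := ht.1
    have hsubJ : Set.Icc a t ⊆ Set.Icc a b := Set.Icc_subset_Icc le_rfl ht.2
    have e2 : ∫ s in a..t, A s *ᵥ ub s
        = ∫ s in a..t, (A s * Y s) *ᵥ (∫ τ in a..s, (Y τ)⁻¹ *ᵥ f τ) := by
      refine intervalIntegral.integral_congr fun s hs => ?_
      rw [Set.uIcc_of_le hat] at hs
      rw [hubv2 s (hsubJ hs), Matrix.mulVec_mulVec]
    rw [e2, triangle_swap hat (hAY.mono_set hsubJ) (hk.mono_set hsubJ)]
    have e3 : ∀ τ ∈ Set.uIcc a t,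
        (∫ s in τ..t, A s * Y s) *ᵥ ((Y τ)⁻¹ *ᵥ f τ)
          = f τ - Y t *ᵥ ((Y τ)⁻¹ *ᵥ f τ) := by
      intro τ hτ
      rw [Set.uIcc_of_le hat] at hτ
      have hτJ : τ ∈ Set.Icc a b := hsubJ hτ
      have i1 : ∫ s in τ..t, A s * Y s = Y τ - Y t := by
        have d : (∫ s in a..t, A s * Y s) - ∫ s in a..τ, A s * Y s
            = ∫ s in τ..t, A s * Y s :=
          intervalIntegral.integral_interval_sub_left (II hAY haJ ht) (II hAY haJ hτJ)
        rw [← d, hY t ht, hY τ hτJ]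
        abel
      rw [i1, Matrix.sub_mulVec, Matrix.mulVec_mulVec, Matrix.mulVec_mulVec,
        Matrix.mul_nonsing_inv _ ((Matrix.isUnit_iff_isUnit_det _).mp (hdet τ hτJ)),
        Matrix.one_mulVec, ← Matrix.mulVec_mulVec]
    rw [intervalIntegral.integral_congr e3]
    have hYtk : IntervalIntegrable (fun τ => Y t *ᵥ ((Y τ)⁻¹ *ᵥ f τ)) volume a t := by
      refine II (c := a) (d := t) ?_ haJ ht
      exact int_mulVec measurableSet_Icc aestronglyMeasurable_const
        hk.aestronglyMeasurable (hk.norm.const_mul ‖Y t‖) (fun r hr => le_rfl)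
    rw [intervalIntegral.integral_sub (II hf haJ ht) hYtk]
    have e4 : ∫ τ in a..t, Y t *ᵥ ((Y τ)⁻¹ *ᵥ f τ)
        = Y t *ᵥ ∫ τ in a..t, (Y τ)⁻¹ *ᵥ f τ := by
      simpa using ContinuousLinearMap.intervalIntegral_comp_comm (mulVecL m (Y t))
        (II hk haJ ht)
    rw [e4, ← hubv2 t ht]
    abel
  -- combination: x(t) = Y(t) c + uR(t)
  obtain ⟨CX, hCX⟩ := isCompact_Icc.exists_bound_of_continuousOn
    (hxbc.continuousOn (s := Set.Icc a b))
  have hAxb : IntegrableOn (fun s => A s *ᵥ xb s) (Set.Icc a b) :=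
    int_mulVec measurableSet_Icc hA.aestronglyMeasurable
      (hxbc.aestronglyMeasurable.restrict) (hA.norm.mul_const CX)
      (fun r hr => mul_le_mul_of_nonneg_left (hCX r hr) (norm_nonneg _))
  have hveq : ∀ t ∈ Set.Icc a b, (fun r => xb r - Y r *ᵥ c - ub r) t
      = -∫ s in a..t, A s *ᵥ ((fun r => xb r - Y r *ᵥ c - ub r) s) := by
    intro t ht
    have hxe : xb t = c + ((∫ s in a..t, f s) - ∫ s in a..t, A s *ᵥ xb s) := by
      rw [hxbv t ht]
      have h0 := hx ⟨t, ht⟩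
      rw [h0, ← intervalIntegral.integral_sub (II hf haJ ht) (II hAxb haJ ht)]
    have hye := hYw c t ht
    have hue := huReq t ht
    have hsub1 : IntervalIntegrable (fun s => A s *ᵥ xb s - A s *ᵥ (Y s *ᵥ c)) volume a t :=
      (II hAxb haJ ht).sub (II (hYwint c) haJ ht)
    have hsplit : ∫ s in a..t, A s *ᵥ (xb s - Y s *ᵥ c - ub s)
        = ((∫ s in a..t, A s *ᵥ xb s) - ∫ s in a..t, A s *ᵥ (Y s *ᵥ c))
          - ∫ s in a..t, A s *ᵥ ub s := by
      have e : (fun s => A s *ᵥ (xb s - Y s *ᵥ c - ub s))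
          = fun s => (A s *ᵥ xb s - A s *ᵥ (Y s *ᵥ c)) - A s *ᵥ ub s :=
        funext fun s => by rw [Matrix.mulVec_sub, Matrix.mulVec_sub]
      rw [e, intervalIntegral.integral_sub hsub1 (II hAub haJ ht),
        intervalIntegral.integral_sub (II hAxb haJ ht) (II (hYwint c) haJ ht)]
    simp only
    rw [hsplit, hxe, hye, hue]
    abel
  have hvcont : ContinuousOn (fun r => xb r - Y r *ᵥ c - ub r) (Set.Icc a b) := by
    refine (ContinuousOn.sub (hxbc.continuousOn) ?_).sub (hubc.continuousOn)
    have : ContinuousOn (fun r => ((mulVecL m).flip c) (Y r)) (Set.Icc a b) :=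
      ((mulVecL m).flip c).continuous.comp_continuousOn hYcont
    simpa using this
  have h0 := gronwall0 hab.le hA hvcont hveq
  have hmain' : ∀ t : Set.Icc a b, x t = Y (t : ℝ) *ᵥ c + uR t := by
    intro t
    have h1 := h0 (t : ℝ) t.2
    rw [hxbv _ t.2, hubv _ t.2, Subtype.coe_eta, sub_sub, sub_eq_zero] at h1
    exact h1
  -- endgame: identify c via B
  have hYrest : Continuous fun t : Set.Icc a b => Y (t : ℝ) := hYcont.restrict
  set u : Fin m → C(Set.Icc a b, Fin m → ℂ) := fun j =>
    ⟨fun t => fun i => Y (t : ℝ) i j, by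
      refine continuous_pi fun i => ?_
      exact (continuous_apply j).comp ((continuous_apply i).comp hYrest)⟩ with hudef
  have hBu : ∀ j, (fun i => M i j) = B (u j) := fun j => hM j (u j) (fun t => rfl)
  have hxsum : (x : C(Set.Icc a b, Fin m → ℂ)) = (∑ j, c j • u j) + uR := by
    apply ContinuousMap.ext
    intro t
    rw [ContinuousMap.add_apply, ContinuousMap.sum_apply, hmain' t]
    congr 1
    funext i
    simp only [ContinuousMap.smul_apply, hudef, ContinuousMap.coe_mk, Finset.sum_apply,
      Pi.smul_apply, smul_eq_mul]
    simp [Matrix.mulVec, dotProduct, mul_comm]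
  have hBx : q = M *ᵥ c + B uR := by
    rw [← hxq, hxsum, map_add]
    congr 1
    rw [map_sum]
    simp only [_root_.map_smul]
    simp only [← hBu]
    funext i
    simp only [Finset.sum_apply, Pi.smul_apply, smul_eq_mul]
    simp [Matrix.mulVec, dotProduct, mul_comm]
  have hc2 : c = M⁻¹ *ᵥ q + -(M⁻¹ *ᵥ B uR) := by
    have h1 : M⁻¹ *ᵥ (M *ᵥ c) = c := by
      rw [Matrix.mulVec_mulVec,
        Matrix.nonsing_inv_mul _ ((Matrix.isUnit_iff_isUnit_det _).mp hMinv),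
        Matrix.one_mulVec]
    have h2 : M *ᵥ c = q - B uR := by rw [hBx]; abel
    rw [← h1, h2, Matrix.mulVec_sub, sub_eq_add_neg]
  intro t
  rw [hmain' t, hc2, Matrix.mulVec_add]
end

section
/- Let B : C^{(r−1)}([a,b], ℂ^m) → ℂ^{rm} be continuous linear with representation By = Σ_{l=0}^{r−2} α_l y^{(l)}(a) + ∫_a^b (dΦ) y^{(r−1)}, and define T : C([a,b], ℂ^{rm}) → ℂ^{rm} by Tv = Σ_{l=0}^{r−2} α_l v^l(a) + ∫_a^b (dΦ) v^{r−1} for v = col(v⁰,…,v^{r−1}). Then ‖B‖ ≤ ‖T‖ ≤ θ ‖B‖ for some constant θ > 0 depending only on r, m and b − a. -/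
/-- `I` is the Riemann–Stieltjes integral `∫_a^b x dφ` (mesh limit of tagged
Riemann–Stieltjes sums). -/
def IsRSIntegral (a b : ℝ) (φ x : ℝ → ℂ) (I : ℂ) : Prop :=
  ∀ ε > (0 : ℝ), ∃ δ > (0 : ℝ), ∀ (k : ℕ) (t : Fin (k + 1) → ℝ) (ξ : Fin k → ℝ),
    t 0 = a → t (Fin.last k) = b → Monotone t →
    (∀ i : Fin k, t i.castSucc ≤ ξ i ∧ ξ i ≤ t i.succ ∧ t i.succ - t i.castSucc < δ) →
    ‖(∑ i : Fin k, x (ξ i) * (φ (t i.succ) - φ (t i.castSucc))) - I‖ < ε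

/-- `φ` belongs to `NBV([a,b])`. -/
def NBVOn (a b : ℝ) (φ : ℝ → ℂ) : Prop :=
  BoundedVariationOn φ (Set.Icc a b) ∧
    (∀ t ∈ Set.Ioo a b, ContinuousWithinAt φ (Set.Iio t) t) ∧
    φ a = 0 ∧ (∀ t ≤ a, φ t = 0) ∧ (∀ t, b ≤ t → φ t = φ b)

open Set

lemma rs_unique {a b : ℝ} (hab : a < b) {φ x : ℝ → ℂ} {I J : ℂ}
    (hI : IsRSIntegral a b φ x I) (hJ : IsRSIntegral a b φ x J) : I = J := by
  by_contra hne
  have hsub : I - J ≠ 0 := sub_ne_zero.mpr hne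
  have hd : 0 < ‖I - J‖ / 2 := by
    have := norm_pos_iff.mpr hsub; linarith
  obtain ⟨δ₁, hδ₁, H₁⟩ := hI _ hd
  obtain ⟨δ₂, hδ₂, H₂⟩ := hJ _ hd
  have hδ : 0 < min δ₁ δ₂ := lt_min hδ₁ hδ₂
  obtain ⟨k, hk⟩ := exists_nat_gt ((b - a) / min δ₁ δ₂)
  have hba : (0:ℝ) < b - a := by linarith
  have hk0 : (0:ℝ) < k := lt_of_le_of_lt (div_nonneg hba.le hδ.le) hk
  set d : ℝ := (b - a) / k with hddef
  have hdpos : 0 < d := div_pos hba hk0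
  have hdlt : d < min δ₁ δ₂ := by
    rw [hddef, div_lt_iff₀ hk0]
    calc b - a = (b - a) / min δ₁ δ₂ * min δ₁ δ₂ := by field_simp
    _ < k * min δ₁ δ₂ := by exact mul_lt_mul_of_pos_right hk hδ
    _ = min δ₁ δ₂ * k := mul_comm _ _
  set t : Fin (k + 1) → ℝ := fun i => a + i * d with ht
  set ξ : Fin k → ℝ := fun i => t i.castSucc with hξ
  have h0 : t 0 = a := by simp [ht]
  have hlast : t (Fin.last k) = b := by
    simp only [ht, Fin.val_last, hddef]
    field_simp
    ring
  have hmono : Monotone t := by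
    intro i j hij
    have : (i : ℝ) ≤ j := by exact_mod_cast hij
    simp only [ht]
    nlinarith [hdpos.le]
  have hsubd : ∀ i : Fin k, t i.succ - t i.castSucc = d := by
    intro i
    simp only [ht, Fin.val_succ, Fin.coe_castSucc]
    push_cast; ring
  have hmesh : ∀ δ', min δ₁ δ₂ ≤ δ' → ∀ i : Fin k,
      t i.castSucc ≤ ξ i ∧ ξ i ≤ t i.succ ∧ t i.succ - t i.castSucc < δ' := by
    intro δ' hδ' i
    refine ⟨le_rfl, ?_, by rw [hsubd i]; exact lt_of_lt_of_le hdlt hδ'⟩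
    have := hsubd i
    simp only [hξ]; linarith
  have h1 := H₁ k t ξ h0 hlast hmono (hmesh _ (min_le_left _ _))
  have h2 := H₂ k t ξ h0 hlast hmono (hmesh _ (min_le_right _ _))
  set S := ∑ i : Fin k, x (ξ i) * (φ (t i.succ) - φ (t i.castSucc))
  have : ‖I - J‖ ≤ ‖S - J‖ + ‖S - I‖ := by
    calc ‖I - J‖ = ‖(S - J) - (S - I)‖ := by ring_nf
    _ ≤ ‖S - J‖ + ‖S - I‖ := norm_sub_le _ _
  linarith

section Antider

variable {E : Type*} [NormedAddCommGroup E] [NormedSpace ℝ E] [CompleteSpace E]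

noncomputable def antider (a : ℝ) (c : ℕ → E) (g : ℝ → E) : ℕ → ℝ → E
  | 0 => g
  | (k + 1) => fun t => c k + ∫ s in a..t, antider a c g k s

lemma antider_basic (a : ℝ) (c : ℕ → E) {g : ℝ → E} (hg : Continuous g) (k : ℕ) :
    Continuous (antider a c g k) ∧
      ∀ t, HasDerivAt (antider a c g (k + 1)) (antider a c g k t) t := by
  induction k with
  | zero =>
    refine ⟨hg, fun t => ?_⟩
    exact ((hg.integral_hasStrictDerivAt a t).hasDerivAt).const_add (c 0)
  | succ k ih =>
    have hc : Continuous (antider a c g (k + 1)) := by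
      rw [continuous_iff_continuousAt]
      exact fun t => (ih.2 t).continuousAt
    exact ⟨hc, fun t => ((hc.integral_hasStrictDerivAt a t).hasDerivAt).const_add (c (k + 1))⟩

lemma antider_contDiff (a : ℝ) (c : ℕ → E) {g : ℝ → E} (hg : Continuous g) (k : ℕ) :
    ContDiff ℝ (k : ℕ) (antider a c g k) := by
  induction k with
  | zero => exact contDiff_zero.mpr hg
  | succ k ih =>
    have hcast : ((k + 1 : ℕ) : WithTop ℕ∞) = (k : ℕ) + 1 := by push_cast; rfl
    rw [hcast, contDiff_succ_iff_deriv]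
    have hder : deriv (antider a c g (k + 1)) = antider a c g k :=
      funext fun t => ((antider_basic a c hg k).2 t).deriv
    refine ⟨fun t => ((antider_basic a c hg k).2 t).differentiableAt, ?_, by rw [hder]; exact ih⟩
    intro h
    exact absurd h (by simp)

lemma antider_iteratedDerivWithin {a b : ℝ} (hab : a < b) (c : ℕ → E) {g : ℝ → E}
    (hg : Continuous g) (j k : ℕ) :
    ∀ x ∈ Icc a b, iteratedDerivWithin j (antider a c g (j + k)) (Icc a b) x
      = antider a c g k x := by
  induction j generalizing k with
  | zero => intro x hx; simp [iteratedDerivWithin_zero]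
  | succ j ih =>
    intro x hx
    have hjk : j + 1 + k = (j + k) + 1 := by omega
    rw [iteratedDerivWithin_succ']
    have heq : Set.EqOn (derivWithin (antider a c g (j + 1 + k)) (Icc a b))
        (antider a c g (j + k)) (Icc a b) := by
      intro y hy
      rw [hjk]
      exact (((antider_basic a c hg (j + k)).2 y).hasDerivWithinAt).derivWithin
        (uniqueDiffOn_Icc hab y hy)
    rw [iteratedDerivWithin_congr heq hx]
    exact ih k x hx

lemma antider_norm_bound {a b : ℝ} (hab : a ≤ b) {c : ℕ → E} {g : ℝ → E} (hg : Continuous g)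
    {C : ℝ} (hC : 0 ≤ C) (hc : ∀ k, ‖c k‖ ≤ C) (hgb : ∀ t, ‖g t‖ ≤ C) (k : ℕ) :
    ∀ t ∈ Icc a b, ‖antider a c g k t‖ ≤ (1 + (b - a)) ^ k * C := by
  induction k with
  | zero => intro t ht; simpa [antider] using hgb t
  | succ k ih =>
    intro t ht
    have h1 : (1:ℝ) ≤ 1 + (b - a) := by linarith
    have hpow : (1:ℝ) ≤ (1 + (b - a)) ^ k := one_le_pow₀ h1
    have hint : ‖∫ s in a..t, antider a c g k s‖ ≤ ((1 + (b - a)) ^ k * C) * |t - a| := by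
      refine intervalIntegral.norm_integral_le_of_norm_le_const ?_
      intro x hx
      have hx' : x ∈ Icc a b := by
        rcases ht with ⟨hta, htb⟩
        rw [Set.uIoc_of_le hta] at hx
        exact ⟨le_of_lt hx.1, le_trans hx.2 htb⟩
      exact ih x hx'
    have habs : |t - a| ≤ b - a := by
      rcases ht with ⟨hta, htb⟩
      rw [abs_of_nonneg (by linarith)]; linarith
    have : ‖antider a c g (k + 1) t‖ ≤ C + ((1 + (b - a)) ^ k * C) * (b - a) := by
      show ‖c k + ∫ s in a..t, antider a c g k s‖ ≤ _
      calc ‖c k + ∫ s in a..t, antider a c g k s‖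
          ≤ ‖c k‖ + ‖∫ s in a..t, antider a c g k s‖ := norm_add_le _ _
        _ ≤ C + ((1 + (b - a)) ^ k * C) * |t - a| := add_le_add (hc k) hint
        _ ≤ C + ((1 + (b - a)) ^ k * C) * (b - a) := by
            have hM : 0 ≤ (1 + (b - a)) ^ k * C := by positivity
            nlinarith
    calc ‖antider a c g (k + 1) t‖ ≤ C + ((1 + (b - a)) ^ k * C) * (b - a) := this
      _ ≤ (1 + (b - a)) ^ (k + 1) * C := by
          rw [pow_succ]
          nlinarith

end Antider

/-- Inequality (32): for `B : C^{(r−1)}([a,b],ℂ^m) → ℂ^{rm}` with representation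
`By = Σ_{l=0}^{r−2} α_l y^{(l)}(a) + ∫_a^b (dΦ) y^{(r−1)}` and the associated operator
`T : C([a,b],ℂ^{rm}) → ℂ^{rm}`, `Tv = Σ_{l=0}^{r−2} α_l v^l(a) + ∫_a^b (dΦ) v^{r−1}`,
one has `‖B‖ ≤ ‖T‖ ≤ θ ‖B‖` for a constant `θ > 0` depending only on `r`, `m` and
`b − a`. Here `r = n + 2 ≥ 2`, `ℂ^{rm}` is indexed by `Fin (n+2) × Fin m`, `B` is
described through its action `B y = T v` on the columns `v = col(y, y', …, y^{(r−1)})`,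
and its norm through the best constant `K` in `‖T v‖ ≤ K ‖y‖_{C^{(r−1)}}`. -/
theorem operator_norm_equivalence_B_T
    (a b : ℝ) (hab : a < b) (n m : ℕ) (hm : 0 < m) :
    ∃ θ : ℝ, 0 < θ ∧
      ∀ (α : Fin (n + 1) → Matrix (Fin (n + 2) × Fin m) (Fin m) ℂ)
        (Φ : (Fin (n + 2) × Fin m) → Fin m → ℝ → ℂ),
        (∀ lam mu, NBVOn a b (Φ lam mu)) →
        ∀ T : C(Set.Icc a b, Fin (n + 2) → Fin m → ℂ) →L[ℂ]
            ((Fin (n + 2) × Fin m) → ℂ),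
          (∀ v : C(Set.Icc a b, Fin (n + 2) → Fin m → ℂ),
            ∃ I : (Fin (n + 2) × Fin m) → Fin m → ℂ,
              (∀ lam mu, IsRSIntegral a b (Φ lam mu)
                (fun t => Set.IccExtend hab.le v t (Fin.last (n + 1)) mu) (I lam mu)) ∧
              ∀ lam, T v lam =
                (∑ l : Fin (n + 1), (α l).mulVec
                  (fun mu => v ⟨a, Set.left_mem_Icc.mpr hab.le⟩ l.castSucc mu) lam) +
                ∑ mu : Fin m, I lam mu) →
          ((∀ (y : ℝ → Fin m → ℂ), ContDiffOn ℝ (n + 1) y (Set.Icc a b) →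
              ∀ v : C(Set.Icc a b, Fin (n + 2) → Fin m → ℂ),
                (∀ (t : Set.Icc a b) (j : Fin (n + 2)),
                  v t j = iteratedDerivWithin j y (Set.Icc a b) t) →
                ‖T v‖ ≤ ‖T‖ * ∑ j : Fin (n + 2),
                  ⨆ t : Set.Icc a b, ‖iteratedDerivWithin j y (Set.Icc a b) t‖) ∧
            ∀ K : ℝ, 0 ≤ K →
              (∀ (y : ℝ → Fin m → ℂ), ContDiffOn ℝ (n + 1) y (Set.Icc a b) →
                ∀ v : C(Set.Icc a b, Fin (n + 2) → Fin m → ℂ),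
                  (∀ (t : Set.Icc a b) (j : Fin (n + 2)),
                    v t j = iteratedDerivWithin j y (Set.Icc a b) t) →
                  ‖T v‖ ≤ K * ∑ j : Fin (n + 2),
                    ⨆ t : Set.Icc a b, ‖iteratedDerivWithin j y (Set.Icc a b) t‖) →
              ‖T‖ ≤ θ * K) := by
  have hba : (0:ℝ) < b - a := sub_pos.mpr hab
  have hbase : (1:ℝ) ≤ 1 + (b - a) := by linarith
  have hθpos : (0:ℝ) < (n + 2) * (1 + (b - a)) ^ (n + 1) := by
    have := pow_pos (show (0:ℝ) < 1 + (b - a) by linarith) (n + 1)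
    positivity
  refine ⟨(n + 2) * (1 + (b - a)) ^ (n + 1), hθpos, ?_⟩
  intro α Φ hΦ T hT
  haveI : Nonempty (Set.Icc a b) := ⟨⟨a, Set.left_mem_Icc.mpr hab.le⟩⟩
  constructor
  · -- ‖B‖ ≤ ‖T‖
    intro y hy v hv
    have hnn : ∀ j : Fin (n+2),
        0 ≤ ⨆ t : Set.Icc a b, ‖iteratedDerivWithin (j:ℕ) y (Set.Icc a b) t‖ :=
      fun j => Real.iSup_nonneg fun t => norm_nonneg _
    have hSnn : 0 ≤ ∑ j : Fin (n+2),
        ⨆ t : Set.Icc a b, ‖iteratedDerivWithin (j:ℕ) y (Set.Icc a b) t‖ :=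
      Finset.sum_nonneg fun j _ => hnn j
    have hvle : ‖v‖ ≤ ∑ j : Fin (n+2),
        ⨆ t : Set.Icc a b, ‖iteratedDerivWithin (j:ℕ) y (Set.Icc a b) t‖ := by
      refine (ContinuousMap.norm_le v hSnn).mpr ?_
      intro x
      rw [pi_norm_le_iff_of_nonneg hSnn]
      intro j
      have hbdd : BddAbove (Set.range fun t : Set.Icc a b =>
          ‖iteratedDerivWithin (j:ℕ) y (Set.Icc a b) t‖) := by
        have heq : (fun t : Set.Icc a b => ‖iteratedDerivWithin (j:ℕ) y (Set.Icc a b) t‖)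
            = fun t => ‖v t j‖ := funext fun t => by rw [hv t j]
        rw [heq]
        exact (isCompact_range (((continuous_apply j).comp v.continuous).norm)).bddAbove
      have h1 : ‖v x j‖ ≤ ⨆ t : Set.Icc a b,
          ‖iteratedDerivWithin (j:ℕ) y (Set.Icc a b) t‖ := by
        rw [hv x j]; exact le_ciSup hbdd x
      exact le_trans h1 (Finset.single_le_sum (fun i _ => hnn i) (Finset.mem_univ j))
    calc ‖T v‖ ≤ ‖T‖ * ‖v‖ := T.le_opNorm v
      _ ≤ _ := mul_le_mul_of_nonneg_left hvle (norm_nonneg T)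
  · -- ‖T‖ ≤ θ ‖B‖
    intro K hK hB
    refine T.opNorm_le_bound (mul_nonneg hθpos.le hK) ?_
    intro v
    set aPt : Set.Icc a b := ⟨a, Set.left_mem_Icc.mpr hab.le⟩ with haPt
    set g : ℝ → (Fin m → ℂ) :=
      fun t => Set.IccExtend hab.le (⇑v) t (Fin.last (n+1)) with hgdef
    have hgc : Continuous g :=
      (continuous_apply (Fin.last (n+1))).comp (Continuous.Icc_extend' v.continuous)
    set c : ℕ → (Fin m → ℂ) := fun k => v aPt ⟨n - k, by omega⟩ with hcdef
    set F : ℕ → ℝ → (Fin m → ℂ) := antider a c g with hFdef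
    set y : ℝ → Fin m → ℂ := F (n + 1) with hydef
    have hcont : ∀ k, Continuous (F k) := fun k => (antider_basic a c hgc k).1
    have hiter : ∀ (j : ℕ), j ≤ n + 1 → ∀ x ∈ Set.Icc a b,
        iteratedDerivWithin j y (Set.Icc a b) x = F (n + 1 - j) x := by
      intro j hj x hx
      have hsplit : j + (n + 1 - j) = n + 1 := by omega
      have h2 := antider_iteratedDerivWithin hab c hgc j (n + 1 - j) x hx
      rw [hsplit] at h2
      exact h2
    have hcd : ContDiffOn ℝ (n + 1) y (Set.Icc a b) := by
      have h := (antider_contDiff a c hgc (n+1)).contDiffOn (s := Set.Icc a b)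
      have hcast : ((n + 1 : ℕ) : WithTop ℕ∞) = (n : WithTop ℕ∞) + 1 := by push_cast; rfl
      rwa [hcast] at h
    set v' : C(Set.Icc a b, Fin (n+2) → Fin m → ℂ) :=
      ⟨fun t j => F (n + 1 - (j:ℕ)) t,
        continuous_pi fun j => (hcont _).comp continuous_subtype_val⟩ with hv'def
    have hv' : ∀ (t : Set.Icc a b) (j : Fin (n+2)),
        v' t j = iteratedDerivWithin (j:ℕ) y (Set.Icc a b) t := by
      intro t j
      rw [hiter (j:ℕ) (Nat.lt_succ_iff.mp j.isLt) t t.2]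
      rfl
    have hlastagree : ∀ x : Set.Icc a b,
        v' x (Fin.last (n+1)) = v x (Fin.last (n+1)) := by
      intro x
      have h0 : n + 1 - ((Fin.last (n+1)) : ℕ) = 0 := by simp
      show F (n + 1 - ((Fin.last (n+1)) : ℕ)) x = _
      rw [h0]
      exact congrFun (Set.IccExtend_val hab.le (⇑v) x) (Fin.last (n+1))
    have hva : ∀ l : Fin (n+1), v' aPt l.castSucc = v aPt l.castSucc := by
      intro l
      show F (n + 1 - ((l.castSucc : Fin (n+2)) : ℕ)) aPt = v aPt l.castSucc
      have h1 : n + 1 - ((l.castSucc : Fin (n+2)) : ℕ) = (n - (l:ℕ)) + 1 := by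
        have := l.isLt
        simp only [Fin.coe_castSucc]
        omega
      rw [h1]
      show c (n - (l:ℕ)) + (∫ s in a..((aPt : ℝ)), F (n - (l:ℕ)) s) = _
      rw [show ((aPt : ℝ)) = a from rfl, intervalIntegral.integral_same, add_zero]
      show v aPt (⟨n - (n - (l:ℕ)), by omega⟩ : Fin (n+2)) = v aPt l.castSucc
      have hfin : (⟨n - (n - (l:ℕ)), by omega⟩ : Fin (n+2)) = l.castSucc := by
        refine Fin.ext ?_
        have := l.isLt
        simp only [Fin.coe_castSucc]
        omega
      rw [hfin]
    obtain ⟨I, hI, hfor⟩ := hT v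
    obtain ⟨I', hI', hfor'⟩ := hT v'
    have hIeq : ∀ lam mu, I lam mu = I' lam mu := by
      intro lam mu
      have heqf : (fun t => Set.IccExtend hab.le (⇑v') t (Fin.last (n+1)) mu)
          = fun t => Set.IccExtend hab.le (⇑v) t (Fin.last (n+1)) mu := by
        funext t
        show v' (Set.projIcc a b hab.le t) (Fin.last (n+1)) mu
          = v (Set.projIcc a b hab.le t) (Fin.last (n+1)) mu
        rw [hlastagree]
      exact rs_unique hab (hI lam mu) (heqf ▸ hI' lam mu)
    have hTv : T v = T v' := by
      funext lam
      rw [hfor lam, hfor' lam]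
      congr 1
      · refine Finset.sum_congr rfl fun l _ => ?_
        have harg : (fun mu => v aPt l.castSucc mu) = (fun mu => v' aPt l.castSucc mu) := by
          funext mu
          exact (congrFun (hva l) mu).symm
        rw [harg]
      · exact Finset.sum_congr rfl fun mu _ => hIeq lam mu
    have key := hB y hcd v' hv'
    have hvnorm : (0:ℝ) ≤ ‖v‖ := norm_nonneg v
    have hcb : ∀ k, ‖c k‖ ≤ ‖v‖ := fun k =>
      le_trans (norm_le_pi_norm (v aPt) _) (v.norm_coe_le_norm aPt)
    have hgb : ∀ t, ‖g t‖ ≤ ‖v‖ := by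
      intro t
      rw [hgdef]
      show ‖v (Set.projIcc a b hab.le t) (Fin.last (n+1))‖ ≤ _
      exact le_trans (norm_le_pi_norm _ _) (v.norm_coe_le_norm _)
    have hFb : ∀ k, ∀ t ∈ Set.Icc a b, ‖F k t‖ ≤ (1 + (b-a))^k * ‖v‖ :=
      fun k => antider_norm_bound hab.le hgc hvnorm hcb hgb k
    have hsup : ∀ j : Fin (n+2),
        (⨆ t : Set.Icc a b, ‖iteratedDerivWithin (j:ℕ) y (Set.Icc a b) t‖)
        ≤ (1 + (b-a))^(n+1) * ‖v‖ := by
      intro j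
      refine ciSup_le fun t => ?_
      rw [← hv' t j]
      show ‖F (n + 1 - (j:ℕ)) t‖ ≤ _
      refine le_trans (hFb _ t t.2) ?_
      have hp : (1 + (b-a))^(n+1-(j:ℕ)) ≤ (1+(b-a))^(n+1) :=
        pow_le_pow_right₀ hbase (by omega)
      exact mul_le_mul_of_nonneg_right hp hvnorm
    have hsum : (∑ j : Fin (n+2),
        ⨆ t : Set.Icc a b, ‖iteratedDerivWithin (j:ℕ) y (Set.Icc a b) t‖)
        ≤ (n+2) * ((1 + (b-a))^(n+1) * ‖v‖) := by
      calc (∑ j : Fin (n+2), ⨆ t : Set.Icc a b,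
            ‖iteratedDerivWithin (j:ℕ) y (Set.Icc a b) t‖)
          ≤ ∑ _j : Fin (n+2), (1 + (b-a))^(n+1) * ‖v‖ :=
            Finset.sum_le_sum fun j _ => hsup j
        _ = (n+2) * ((1 + (b-a))^(n+1) * ‖v‖) := by
            rw [Finset.sum_const, Finset.card_univ, Fintype.card_fin]
            push_cast; ring
    calc ‖T v‖ = ‖T v'‖ := by rw [hTv]
      _ ≤ K * ∑ j : Fin (n+2),
            ⨆ t : Set.Icc a b, ‖iteratedDerivWithin (j:ℕ) y (Set.Icc a b) t‖ := key
      _ ≤ K * ((n+2) * ((1 + (b-a))^(n+1) * ‖v‖)) := mul_le_mul_of_nonneg_left hsum hK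
      _ = (n + 2) * (1 + (b - a)) ^ (n + 1) * K * ‖v‖ := by ring
end
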